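/- arXiv:1106.2576 — 5 statements merged into one kernel-verified Lean document; each statement's English description precedes it below -/
import Mathlib

section
/- Let h_1 = Σ_{i=1}^t (s_i - 1) + (t-2) and h_2 = Σ_{1≤i<j≤t}(s_i-1)(s_j-1) + (t-2)Σ_{i=1}^t(s_i-1) + C(t-1,2), where s_1,...,s_t are positive integers and t ≥ 2. Then (1, h_1, h_2) is a pure O-sequence; explicitly, there is a pure order ideal whose degree-1 part consists of h_1 variables and whose degree-2 part has exactly h_2 monomials. -/
open Finset

/-- The degree of a monomial, encoded as a finitely supported exponent vector. -/
def mdeg (m : ℕ →₀ ℕ) : ℕ := m.sum fun _ e => e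

/-- An order ideal: a set of monomials closed under divisibility. -/
def IsOrderIdeal (O : Set (ℕ →₀ ℕ)) : Prop := ∀ m ∈ O, ∀ n : ℕ →₀ ℕ, n ≤ m → n ∈ O

/-- `h` is a pure `O`-sequence: it is the degree-count vector of a finite nonempty
order ideal all of whose maximal monomials have the same degree. -/
def IsPureOSeq (h : ℕ → ℤ) : Prop :=
  ∃ O : Set (ℕ →₀ ℕ), O.Finite ∧ O.Nonempty ∧ IsOrderIdeal O ∧
    (∃ D : ℕ, ∀ m ∈ O, (∀ n ∈ O, m ≤ n → n = m) → mdeg m = D) ∧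
    ∀ i : ℕ, h i = ({m ∈ O | mdeg m = i}).ncard

noncomputable def vmon (i : ℕ) : ℕ →₀ ℕ := Finsupp.single i 1
noncomputable def emon (i j : ℕ) : ℕ →₀ ℕ := vmon i + vmon j

lemma mdeg_zero : mdeg 0 = 0 := Finsupp.sum_zero_index

lemma mdeg_add (a b : ℕ →₀ ℕ) : mdeg (a + b) = mdeg a + mdeg b :=
  Finsupp.sum_add_index' (fun _ => rfl) (fun _ _ _ => rfl)

lemma mdeg_single (i e : ℕ) : mdeg (Finsupp.single i e) = e :=
  Finsupp.sum_single_index rfl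

lemma mdeg_vmon (i : ℕ) : mdeg (vmon i) = 1 := mdeg_single i 1

lemma mdeg_emon (i j : ℕ) : mdeg (emon i j) = 2 := by
  simp [emon, mdeg_add, mdeg_vmon]

lemma mdeg_mono {x y : ℕ →₀ ℕ} (h : x ≤ y) : mdeg x ≤ mdeg y := by
  obtain ⟨c, rfl⟩ := le_iff_exists_add.mp h
  simp [mdeg_add]

lemma mdeg_eq_zero {x : ℕ →₀ ℕ} (h : mdeg x = 0) : x = 0 := by
  ext a
  by_contra ha
  have : a ∈ x.support := Finsupp.mem_support_iff.mpr (by simpa using ha)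
  have := Finset.sum_eq_zero_iff.mp h a this
  simp at this
  exact ha (by simpa using this)

lemma vmon_inj {i j : ℕ} (h : vmon i = vmon j) : i = j :=
  Finsupp.single_left_injective one_ne_zero h

lemma vmon_le_emon_left (i j : ℕ) : vmon i ≤ emon i j := le_add_right le_rfl
lemma vmon_le_emon_right (i j : ℕ) : vmon j ≤ emon i j := le_add_left le_rfl

lemma emon_apply (i j a : ℕ) :
    emon i j a = (if i = a then 1 else 0) + (if j = a then 1 else 0) := by
  simp [emon, vmon, Finsupp.single_apply]

lemma emon_inj {i j i' j' : ℕ} (hij : i ≤ j) (hij' : i' ≤ j')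
    (h : emon i j = emon i' j') : i = i' ∧ j = j' := by
  have key : ∀ a b a' b' : ℕ, a ≤ b → a' ≤ b' → emon a b = emon a' b' → a ≤ a' ∧ b' ≤ b := by
    intro a b a' b' hab hab' he
    have h1 : (1:ℕ) ≤ emon a b a' := by rw [he, emon_apply]; simp
    have h2 : (1:ℕ) ≤ emon a b b' := by rw [he, emon_apply]; simp
    rw [emon_apply] at h1 h2
    split_ifs at h1 h2 <;> omega
  have k1 := key i j i' j' hij hij' h
  have k2 := key i' j' i j hij' hij h.symm
  omega

lemma le_emon {i j : ℕ} {x : ℕ →₀ ℕ} (h : x ≤ emon i j) :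
    x = 0 ∨ x = vmon i ∨ x = vmon j ∨ x = emon i j := by
  have hx : ∀ a, x a ≤ emon i j a := fun a => Finsupp.le_def.mp h a
  have hrep : (i ≠ j ∧ x = Finsupp.single i (x i) + Finsupp.single j (x j)) ∨
      (i = j ∧ x = Finsupp.single i (x i)) := by
    by_cases hij : i = j
    · right
      refine ⟨hij, ?_⟩
      ext a
      by_cases ha : a = i
      · subst ha; simp [Finsupp.single_apply]
      · have := hx a
        rw [emon_apply] at this
        rw [if_neg (fun hh => ha hh.symm), if_neg (fun hh => ha (hij ▸ hh.symm))] at this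
        simp [Finsupp.single_apply, Ne.symm ha]
        omega
    · left
      refine ⟨hij, ?_⟩
      ext a
      by_cases hai : a = i
      · subst hai
        simp [Finsupp.single_apply]
        omega
      · by_cases haj : a = j
        · subst haj
          simp [Finsupp.single_apply]
          omega
        · have := hx a
          rw [emon_apply, if_neg (fun hh => hai hh.symm), if_neg (fun hh => haj hh.symm)] at this
          simp [Finsupp.single_apply, Ne.symm hai, Ne.symm haj]
          omega
  have hxi : x i ≤ emon i j i := hx i
  have hxj : x j ≤ emon i j j := hx j
  rw [emon_apply] at hxi hxj
  rcases hrep with ⟨hij, hrep⟩ | ⟨rfl, hrep⟩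
  · have hi1 : x i ≤ 1 := by
      rw [if_pos rfl, if_neg (fun hh : j = i => hij hh.symm)] at hxi; omega
    have hj1 : x j ≤ 1 := by
      rw [if_pos rfl, if_neg hij] at hxj; omega
    interval_cases hxi' : x i <;> interval_cases hxj' : x j <;>
      simp [hrep, vmon, emon]
  · have hi2 : x i ≤ 2 := by simp at hxi; omega
    interval_cases hxi' : x i
    · simp at hrep; simp [hrep]
    · right; left; rw [hrep]; rfl
    · right; right; right
      rw [hrep, emon, vmon, ← Finsupp.single_add]

lemma le_vmon {i : ℕ} {x : ℕ →₀ ℕ} (h : x ≤ vmon i) : x = 0 ∨ x = vmon i := by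
  have h2 : x ≤ emon i i := le_trans h (vmon_le_emon_left i i)
  have hd : mdeg x ≤ 1 := by simpa [mdeg_vmon] using mdeg_mono h
  rcases le_emon h2 with h0 | h1 | h1 | h1
  · exact Or.inl h0
  · exact Or.inr h1
  · exact Or.inr h1
  · rw [h1] at hd; rw [mdeg_emon] at hd; omega

lemma sum_range_succ_mul_two (n : ℕ) : (∑ j ∈ range n, (j+1)) * 2 = n * (n+1) := by
  induction n with
  | zero => simp
  | succ m ih => rw [Finset.sum_range_succ, add_mul, ih]; ring

lemma main (n k : ℕ) (hk : k = 0 ∨ (n ≤ 2*k ∧ 2*k ≤ n*(n+1))) :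
    IsPureOSeq (fun j => if j = 0 then 1 else if j = 1 then (n : ℤ)
      else if j = 2 then (k : ℤ) else 0) := by
  classical
  set V : Finset (ℕ →₀ ℕ) := (range n).image vmon with hV
  set P : Finset (ℕ →₀ ℕ) :=
    ((range n).sigma fun j => range (j+1)).image (fun p => emon p.2 p.1) with hP
  have hPmem : ∀ m ∈ P, ∃ i j, i ≤ j ∧ j < n ∧ m = emon i j := by
    intro m hm
    rw [hP, Finset.mem_image] at hm
    obtain ⟨p, hp, rfl⟩ := hm
    rw [Finset.mem_sigma, Finset.mem_range, Finset.mem_range] at hp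
    exact ⟨p.2, p.1, by omega, hp.1, rfl⟩
  have hPcard : P.card * 2 = n * (n+1) := by
    rw [hP, Finset.card_image_of_injOn, Finset.card_sigma]
    · simp only [Finset.card_range]
      exact sum_range_succ_mul_two n
    · intro p hp q hq hpq
      rw [Finset.mem_coe, Finset.mem_sigma, Finset.mem_range, Finset.mem_range] at hp hq
      have h1 := emon_inj (by omega) (by omega) hpq
      exact Sigma.ext h1.2 (by simp [h1.1])
  have hEex : ∃ E : Finset (ℕ →₀ ℕ), E ⊆ P ∧ E.card = k ∧
      (0 < k → ∀ v < n, ∃ e ∈ E, vmon v ≤ e) := by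
    rcases hk with rfl | ⟨hk1, hk2⟩
    · exact ⟨∅, Finset.empty_subset _, Finset.card_empty, by omega⟩
    · set M : Finset (ℕ →₀ ℕ) :=
        (range ((n+1)/2)).image (fun i => emon (2*i) (min (2*i+1) (n-1))) with hM
      have hMP : M ⊆ P := by
        intro m hm
        rw [hM, Finset.mem_image] at hm
        obtain ⟨i, hi, rfl⟩ := hm
        rw [Finset.mem_range] at hi
        rw [hP, Finset.mem_image]
        refine ⟨⟨min (2*i+1) (n-1), 2*i⟩, ?_, rfl⟩
        rw [Finset.mem_sigma, Finset.mem_range, Finset.mem_range]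
        dsimp only
        omega
      have hMcard : M.card ≤ (n+1)/2 := le_trans Finset.card_image_le (by simp)
      have hMk : M.card ≤ k := by omega
      have hkP : k ≤ P.card := by
        have h2 : 2*k ≤ P.card * 2 := by rw [hPcard]; exact hk2
        omega
      obtain ⟨T, hTsub, hTcard⟩ : ∃ T ⊆ P \ M, T.card = k - M.card := by
        apply Finset.exists_subset_card_eq
        rw [Finset.card_sdiff_of_subset hMP]
        omega
      have hdisj : Disjoint M T := by
        rw [Finset.disjoint_left]
        intro a haM haT
        have := hTsub haT
        rw [Finset.mem_sdiff] at this
        exact this.2 haM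
      refine ⟨M ∪ T, ?_, ?_, ?_⟩
      · apply Finset.union_subset hMP
        exact hTsub.trans (Finset.sdiff_subset)
      · rw [Finset.card_union_of_disjoint hdisj, hTcard]
        omega
      · intro _ v hv
        have hv2 : v/2 < (n+1)/2 := by omega
        refine ⟨emon (2*(v/2)) (min (2*(v/2)+1) (n-1)), ?_, ?_⟩
        · apply Finset.mem_union_left
          rw [hM, Finset.mem_image]
          exact ⟨v/2, Finset.mem_range.mpr hv2, rfl⟩
        · rcases Nat.even_or_odd v with he | ho
          · rw [Nat.even_iff] at he
            have h2 : 2*(v/2) = v := by omega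
            rw [h2]
            exact vmon_le_emon_left _ _
          · rw [Nat.odd_iff] at ho
            have h2 : min (2*(v/2)+1) (n-1) = v := by omega
            rw [h2]
            exact vmon_le_emon_right _ _
  obtain ⟨E, hEP, hEcard, hEcover⟩ := hEex
  have hEdeg : ∀ m ∈ E, mdeg m = 2 := by
    intro m hm
    obtain ⟨i, j, _, _, rfl⟩ := hPmem m (hEP hm)
    exact mdeg_emon i j
  have hVdeg : ∀ m ∈ V, mdeg m = 1 := by
    intro m hm
    rw [hV, Finset.mem_image] at hm
    obtain ⟨i, _, rfl⟩ := hm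
    exact mdeg_vmon i
  set O : Finset (ℕ →₀ ℕ) := insert 0 (V ∪ E) with hO
  have hmemO : ∀ m, m ∈ O ↔ m = 0 ∨ m ∈ V ∨ m ∈ E := by
    intro m; rw [hO]; simp
  -- filters
  have hf0 : O.filter (fun m => mdeg m = 0) = {0} := by
    ext m
    rw [Finset.mem_filter, hmemO, Finset.mem_singleton]
    constructor
    · rintro ⟨h1 | h1 | h1, h2⟩
      · exact h1
      · rw [hVdeg m h1] at h2; omega
      · rw [hEdeg m h1] at h2; omega
    · rintro rfl; exact ⟨Or.inl rfl, mdeg_zero⟩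
  have hf1 : O.filter (fun m => mdeg m = 1) = V := by
    ext m
    rw [Finset.mem_filter, hmemO]
    constructor
    · rintro ⟨h1 | h1 | h1, h2⟩
      · rw [h1, mdeg_zero] at h2; omega
      · exact h1
      · rw [hEdeg m h1] at h2; omega
    · intro h; exact ⟨Or.inr (Or.inl h), hVdeg m h⟩
  have hf2 : O.filter (fun m => mdeg m = 2) = E := by
    ext m
    rw [Finset.mem_filter, hmemO]
    constructor
    · rintro ⟨h1 | h1 | h1, h2⟩
      · rw [h1, mdeg_zero] at h2; omega
      · rw [hVdeg m h1] at h2; omega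
      · exact h1
    · intro h; exact ⟨Or.inr (Or.inr h), hEdeg m h⟩
  have hf3 : ∀ d, 3 ≤ d → O.filter (fun m => mdeg m = d) = ∅ := by
    intro d hd
    rw [Finset.filter_eq_empty_iff]
    intro m hm
    rw [hmemO] at hm
    rcases hm with h1 | h1 | h1
    · rw [h1, mdeg_zero]; omega
    · rw [hVdeg m h1]; omega
    · rw [hEdeg m h1]; omega
  have hVcard : V.card = n := by
    rw [hV, Finset.card_image_of_injective _ (fun a b h => vmon_inj h), Finset.card_range]
  refine ⟨↑O, O.finite_toSet, ⟨0, by simp [hmemO]⟩, ?_, ?_, ?_⟩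
  · -- order ideal
    intro m hm x hx
    rw [Finset.mem_coe, hmemO] at hm
    rcases hm with rfl | hm | hm
    · have : x = 0 := by
        ext a
        have := Finsupp.le_def.mp hx a
        simpa using this
      rw [Finset.mem_coe, hmemO]; exact Or.inl this
    · rw [hV, Finset.mem_image] at hm
      obtain ⟨v, hv, rfl⟩ := hm
      rcases le_vmon hx with rfl | rfl
      · rw [Finset.mem_coe, hmemO]; exact Or.inl rfl
      · rw [Finset.mem_coe, hmemO]
        exact Or.inr (Or.inl (by rw [hV, Finset.mem_image]; exact ⟨v, hv, rfl⟩))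
    · obtain ⟨i, j, hij, hjn, rfl⟩ := hPmem m (hEP hm)
      rw [Finset.mem_coe, hmemO]
      rcases le_emon hx with rfl | rfl | rfl | rfl
      · exact Or.inl rfl
      · exact Or.inr (Or.inl (by rw [hV, Finset.mem_image]; exact ⟨i, Finset.mem_range.mpr (by omega), rfl⟩))
      · exact Or.inr (Or.inl (by rw [hV, Finset.mem_image]; exact ⟨j, Finset.mem_range.mpr hjn, rfl⟩))
      · exact Or.inr (Or.inr hm)
  · -- purity
    by_cases hk0 : k = 0
    · subst hk0
      have hE : E = ∅ := Finset.card_eq_zero.mp hEcard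
      by_cases hn0 : n = 0
      · refine ⟨0, ?_⟩
        intro m hm _
        rw [Finset.mem_coe, hmemO] at hm
        rcases hm with rfl | hm | hm
        · exact mdeg_zero
        · rw [hV, hn0] at hm; simp at hm
        · rw [hE] at hm; simp at hm
      · refine ⟨1, ?_⟩
        intro m hm hmax
        rw [Finset.mem_coe, hmemO] at hm
        rcases hm with rfl | hm | hm
        · exfalso
          have h0 : vmon 0 ∈ (↑O : Set (ℕ →₀ ℕ)) := by
            rw [Finset.mem_coe, hmemO]
            exact Or.inr (Or.inl (by rw [hV, Finset.mem_image]; exact ⟨0, Finset.mem_range.mpr (by omega), rfl⟩))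
          have := hmax (vmon 0) h0 (zero_le)
          have h1 := mdeg_vmon 0
          rw [this, mdeg_zero] at h1
          omega
        · exact hVdeg m hm
        · rw [hE] at hm; simp at hm
    · refine ⟨2, ?_⟩
      have hkpos : 0 < k := Nat.pos_of_ne_zero hk0
      have hnpos : 0 < n := by
        rcases hk with h | ⟨h1, h2⟩
        · omega
        · by_contra hn
          push_neg at hn
          interval_cases n
          simp at h2
          omega
      intro m hm hmax
      rw [Finset.mem_coe, hmemO] at hm
      rcases hm with rfl | hm | hm
      · exfalso
        obtain ⟨e, he⟩ := Finset.card_pos.mp (by omega : 0 < E.card)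
        have heO : e ∈ (↑O : Set (ℕ →₀ ℕ)) := by
          rw [Finset.mem_coe, hmemO]; exact Or.inr (Or.inr he)
        have := hmax e heO (zero_le)
        have h1 := hEdeg e he
        rw [this, mdeg_zero] at h1
        omega
      · exfalso
        rw [hV, Finset.mem_image] at hm
        obtain ⟨v, hv, rfl⟩ := hm
        obtain ⟨e, heE, hle⟩ := hEcover hkpos v (Finset.mem_range.mp hv)
        have heO : e ∈ (↑O : Set (ℕ →₀ ℕ)) := by
          rw [Finset.mem_coe, hmemO]; exact Or.inr (Or.inr heE)
        have := hmax e heO hle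
        have h1 := hEdeg e heE
        rw [this, mdeg_vmon] at h1
        omega
      · exact hEdeg m hm
  · -- counting
    intro i
    have hset : ({m ∈ (↑O : Set (ℕ →₀ ℕ)) | mdeg m = i}).ncard
        = (O.filter (fun m => mdeg m = i)).card := by
      rw [show {m | m ∈ (↑O : Set (ℕ →₀ ℕ)) ∧ mdeg m = i}
          = ↑(O.filter fun m => mdeg m = i) by ext m; simp,
        Set.ncard_coe_finset]
    rw [hset]
    rcases i with _ | _ | _ | i
    · simp [hf0]
    · simp [hf1, hVcard]
    · simp [hf2, hEcard]
    · simp [hf3 (i+3) (by omega)]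

lemma sq_sum_eq (t : ℕ) (a : Fin t → ℕ) :
    (∑ i, a i) * (∑ i, a i) =
      2 * (∑ p ∈ Finset.univ.filter (fun p : Fin t × Fin t => p.1 < p.2), a p.1 * a p.2)
        + ∑ i, a i * a i := by
  have h1 : (∑ i, a i) * (∑ i, a i) = ∑ p : Fin t × Fin t, a p.1 * a p.2 := by
    rw [Finset.sum_mul_sum]
    rw [Fintype.sum_prod_type]
  have hsplit1 := Finset.sum_filter_add_sum_filter_not Finset.univ
    (fun p : Fin t × Fin t => p.1 < p.2) (fun p => a p.1 * a p.2)
  have hsplit2 := Finset.sum_filter_add_sum_filter_not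
    (Finset.univ.filter (fun p : Fin t × Fin t => ¬ p.1 < p.2))
    (fun p : Fin t × Fin t => p.2 < p.1) (fun p => a p.1 * a p.2)
  rw [Finset.filter_filter, Finset.filter_filter] at hsplit2
  have hgt : Finset.univ.filter (fun p : Fin t × Fin t => ¬ p.1 < p.2 ∧ p.2 < p.1)
      = Finset.univ.filter (fun p : Fin t × Fin t => p.2 < p.1) := by
    apply Finset.filter_congr
    intro p _
    constructor
    · exact fun h => h.2
    · exact fun h => ⟨fun h2 => absurd (lt_trans h h2) (lt_irrefl _), h⟩
  have hdiagf : Finset.univ.filter (fun p : Fin t × Fin t => ¬ p.1 < p.2 ∧ ¬ p.2 < p.1)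
      = Finset.univ.filter (fun p : Fin t × Fin t => p.1 = p.2) := by
    apply Finset.filter_congr
    intro p _
    constructor
    · exact fun h => le_antisymm (not_lt.mp h.2) (not_lt.mp h.1)
    · exact fun h => ⟨by rw [h]; exact lt_irrefl _, by rw [h]; exact lt_irrefl _⟩
  rw [hgt, hdiagf] at hsplit2
  have hswap : ∑ p ∈ Finset.univ.filter (fun p : Fin t × Fin t => p.2 < p.1), a p.1 * a p.2
      = ∑ p ∈ Finset.univ.filter (fun p : Fin t × Fin t => p.1 < p.2), a p.1 * a p.2 := by
    apply Finset.sum_equiv (Equiv.prodComm (Fin t) (Fin t))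
    · intro p; simp [Equiv.prodComm]
    · intro p _; exact mul_comm _ _
  have hdiag : ∑ p ∈ Finset.univ.filter (fun p : Fin t × Fin t => p.1 = p.2), a p.1 * a p.2
      = ∑ i, a i * a i := by
    apply Finset.sum_bij (fun (p : Fin t × Fin t) _ => p.1)
    · intro p _; exact Finset.mem_univ _
    · intro p hp q hq hpq
      rw [Finset.mem_filter] at hp hq
      exact Prod.ext hpq (by rw [← hp.2, ← hq.2, hpq])
    · intro b _
      exact ⟨(b, b), Finset.mem_filter.mpr ⟨Finset.mem_univ _, rfl⟩, rfl⟩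
    · intro p hp
      rw [Finset.mem_filter] at hp
      rw [← hp.2]
  rw [hswap] at hsplit2
  rw [hdiag] at hsplit2
  rw [h1, ← hsplit1, ← hsplit2]
  ring

lemma two_mul_choose_two (m : ℕ) : 2 * Nat.choose m 2 = m * (m - 1) := by
  rw [Nat.choose_two_right]
  rcases m with _ | m'
  · simp
  · have he : Even ((m' + 1) * (m' + 1 - 1)) := by
      simp only [Nat.add_sub_cancel]
      rw [mul_comm]
      exact Nat.even_mul_succ_self m'
    exact Nat.two_mul_div_two_of_even he

theorem stmt3 {t : ℕ} (ht : 2 ≤ t) (s : Fin t → ℕ) (hs : ∀ i, 1 ≤ s i) :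
    IsPureOSeq (fun j =>
      if j = 0 then 1
      else if j = 1 then ((∑ i, (s i - 1)) + (t - 2) : ℕ)
      else if j = 2 then ((∑ p ∈ Finset.univ.filter (fun p : Fin t × Fin t => p.1 < p.2), (s p.1 - 1) * (s p.2 - 1)) +
        (t - 2) * (∑ i, (s i - 1)) + Nat.choose (t - 1) 2 : ℕ)
      else 0) := by
  have harith :
      ((∑ p ∈ Finset.univ.filter (fun p : Fin t × Fin t => p.1 < p.2), (s p.1 - 1) * (s p.2 - 1)) +
        (t - 2) * (∑ i, (s i - 1)) + Nat.choose (t - 1) 2) = 0 ∨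
      (((∑ i, (s i - 1)) + (t - 2)) ≤ 2 * ((∑ p ∈ Finset.univ.filter (fun p : Fin t × Fin t => p.1 < p.2), (s p.1 - 1) * (s p.2 - 1)) +
        (t - 2) * (∑ i, (s i - 1)) + Nat.choose (t - 1) 2) ∧
       2 * ((∑ p ∈ Finset.univ.filter (fun p : Fin t × Fin t => p.1 < p.2), (s p.1 - 1) * (s p.2 - 1)) +
        (t - 2) * (∑ i, (s i - 1)) + Nat.choose (t - 1) 2)
        ≤ (((∑ i, (s i - 1)) + (t - 2))) * ((((∑ i, (s i - 1)) + (t - 2))) + 1)) := by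
    obtain ⟨u, rfl⟩ : ∃ u, t = u + 2 := ⟨t - 2, by omega⟩
    have h21 : u + 2 - 2 = u := by omega
    have h11 : u + 2 - 1 = u + 1 := by omega
    rw [h21, h11]
    set S := ∑ i, (s i - 1) with hS
    set e2 := ∑ p ∈ Finset.univ.filter (fun p : Fin (u+2) × Fin (u+2) => p.1 < p.2),
      (s p.1 - 1) * (s p.2 - 1) with he2
    set Q := ∑ i, (s i - 1) * (s i - 1) with hQ
    have hsq : S * S = 2 * e2 + Q := sq_sum_eq (u+2) (fun i => s i - 1)
    have hSQ : S ≤ Q := by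
      apply Finset.sum_le_sum
      intro i _
      rcases Nat.eq_zero_or_pos (s i - 1) with h | h
      · simp [h]
      · exact Nat.le_mul_of_pos_left _ h
    have hch : 2 * Nat.choose (u + 1) 2 = (u + 1) * u := by
      rw [two_mul_choose_two]
      simp
    rcases Nat.eq_zero_or_pos u with rfl | hu
    · -- t = 2
      have hch0 : Nat.choose 1 2 = 0 := by decide
      rw [hch0]
      simp only [Nat.zero_mul, Nat.add_zero, Nat.zero_add, Nat.mul_zero]
      -- compute e2 for Fin 2
      have hab : e2 = (s 0 - 1) * (s 1 - 1) := by
        rw [he2]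
        rw [Finset.sum_filter, Fintype.sum_prod_type]
        rw [Fin.sum_univ_two]
        rw [Fin.sum_univ_two, Fin.sum_univ_two]
        norm_num
      have hS2 : S = (s 0 - 1) + (s 1 - 1) := by
        rw [hS, Fin.sum_univ_two]
      rcases Nat.eq_zero_or_pos e2 with h0 | hpos
      · exact Or.inl h0
      · right
        rw [hab] at hpos
        rw [hab, hS2]
        obtain ⟨h0, h1'⟩ := Nat.mul_ne_zero_iff.mp (Nat.pos_iff_ne_zero.mp hpos)
        have ha : 1 ≤ s 0 - 1 := Nat.one_le_iff_ne_zero.mpr h0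
        have hb : 1 ≤ s 1 - 1 := Nat.one_le_iff_ne_zero.mpr h1'
        constructor <;> nlinarith
    · -- t ≥ 3
      right
      have hle1 : S ≤ (u + 1) * S := Nat.le_mul_of_pos_left _ (by omega)
      have hle2 : u + 1 ≤ (u + 1) * u + (u+1) := by nlinarith
      constructor
      · nlinarith [hch, hle1]
      · nlinarith [hsq, hSQ, hch]
  exact main _ _ harith
end

section
/- The set O = {x_1^{a_1(B)} x_2^{a_2(B)} : B a basis of M} (for M a loopless rank-2 matroid with ordered parallelism classes) is closed under divisibility: if x_1^{a} x_2^{b} ∈ O with a > 0 then x_1^{a-1} x_2^{b} ∈ O, and if b > 0 then x_1^{a} x_2^{b-1} ∈ O. -/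
open Finset

/-- `a1 E k l x y` : the number of elements greater than `x` lying in the
parallelism classes `E k, ..., E (l-1)`, other than `y`. -/
def a1 {α : Type*} [LinearOrder α] [DecidableEq α] {t : ℕ} (E : Fin t → Finset α)
    (k l : Fin t) (x y : α) : ℕ :=
  (((Finset.Ico k l).biUnion E).filter (fun v => x < v ∧ v ≠ y)).card

/-- `a2 E l y` : the number of elements greater than `y` lying in the
parallelism classes `E l, ..., E (t-1)`. -/
def a2 {α : Type*} [LinearOrder α] [DecidableEq α] {t : ℕ} (E : Fin t → Finset α)
    (l : Fin t) (y : α) : ℕ :=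
  (((Finset.Ici l).biUnion E).filter (fun v => y < v)).card

section Helpers

variable {α : Type*} [LinearOrder α]

/-- In a finite linearly ordered set `S`, for any `j < |S|` there is an element with
exactly `j` elements of `S` above it. -/
lemma exists_filter_lt_card (j : ℕ) : ∀ S : Finset α, j < S.card →
    ∃ z ∈ S, (S.filter (fun v => z < v)).card = j := by
  induction j with
  | zero =>
    intro S hS
    have hne : S.Nonempty := card_pos.mp hS
    refine ⟨S.max' hne, S.max'_mem hne, ?_⟩
    rw [Finset.card_eq_zero, Finset.filter_eq_empty_iff]
    exact fun v hv => not_lt.mpr (S.le_max' v hv)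
  | succ j ih =>
    intro S hS
    have hne : S.Nonempty := card_pos.mp (Nat.lt_of_le_of_lt (Nat.zero_le _) hS)
    have hmS : S.max' hne ∈ S := S.max'_mem hne
    obtain ⟨z, hz, hcard⟩ := ih (S.erase (S.max' hne))
      (by rw [card_erase_of_mem hmS]; omega)
    have hzS : z ∈ S := mem_of_mem_erase hz
    have hzm : z < S.max' hne := lt_of_le_of_ne (S.le_max' z hzS) (ne_of_mem_erase hz)
    refine ⟨z, hzS, ?_⟩
    have h1 : (S.erase (S.max' hne)).filter (fun v => z < v)
        = (S.filter (fun v => z < v)).erase (S.max' hne) := Finset.filter_erase _ _ _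
    have hmf : S.max' hne ∈ S.filter (fun v => z < v) := mem_filter.mpr ⟨hmS, hzm⟩
    have h2 := Finset.card_erase_of_mem hmf
    have h3 : 0 < (S.filter (fun v => z < v)).card := card_pos.mpr ⟨_, hmf⟩
    rw [h1, h2] at hcard
    omega

/-- Counting elements above `z ∈ E k'` in `⋃_{[k,m)} E i` equals counting them in
`⋃_{[k',m)} E i`, since classes below `k'` consist of elements below `z`. -/
lemma filter_biUnion_restrict {t : ℕ} (E : Fin t → Finset α)
    (hord : ∀ (k l : Fin t) (a b : α), a ∈ E k → b ∈ E l → k < l → a < b)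
    {k k' m : Fin t} {z : α} (hz : z ∈ E k') (hk : k ≤ k') :
    (((Finset.Ico k m).biUnion E).filter (fun v => z < v))
      = (((Finset.Ico k' m).biUnion E).filter (fun v => z < v)) := by
  ext v
  simp only [mem_filter, mem_biUnion, mem_Ico]
  constructor
  · rintro ⟨⟨i, ⟨hki, him⟩, hvi⟩, hzv⟩
    refine ⟨⟨i, ⟨?_, him⟩, hvi⟩, hzv⟩
    by_contra hik
    exact absurd (hord i k' v z hvi hz (not_le.mp hik)) (not_lt.mpr hzv.le)
  · rintro ⟨⟨i, ⟨hki, him⟩, hvi⟩, hzv⟩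
    exact ⟨⟨i, ⟨hk.trans hki, him⟩, hvi⟩, hzv⟩

lemma not_mem_biUnion_of_class {t : ℕ} (E : Fin t → Finset α)
    (hdisj : ∀ i j : Fin t, i ≠ j → Disjoint (E i) (E j))
    {l : Fin t} {y : α} (hy : y ∈ E l) {s : Finset (Fin t)} (hl : l ∉ s) :
    y ∉ s.biUnion E := by
  intro h
  obtain ⟨i, his, hyi⟩ := mem_biUnion.mp h
  exact (Finset.disjoint_left.mp (hdisj i l (fun e => hl (e ▸ his))) hyi hy)

lemma a1_eq_of_not_mem {t : ℕ} (E : Fin t → Finset α) (k l : Fin t) (x y : α)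
    (hy : y ∉ (Finset.Ico k l).biUnion E) :
    a1 E k l x y = (((Finset.Ico k l).biUnion E).filter (fun v => x < v)).card := by
  unfold a1
  congr 1
  apply filter_congr
  intro v hv
  exact ⟨fun h => h.1, fun h => ⟨h, fun e => hy (e ▸ hv)⟩⟩

lemma base_of_indep_two {α : Type*} [Fintype α] (M : Matroid α)
    (hrank : ∀ B : Set α, M.IsBase B → B.ncard = 2) {a b : α} (hab : a ≠ b)
    (h : M.Indep {a, b}) : M.IsBase {a, b} := by
  obtain ⟨B, hB, hsub⟩ := h.exists_isBase_superset
  have heq : ({a, b} : Set α) = B :=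
    Set.eq_of_subset_of_ncard_le hsub
      (by rw [hrank B hB, Set.ncard_pair hab]) (Set.toFinite B)
  rwa [heq]

end Helpers

theorem stmt6 {α : Type*} [Fintype α] [LinearOrder α] {t : ℕ}
    (M : Matroid α) (E : Fin t → Finset α)
    (hloop : ∀ a : α, a ∈ M.E → M.Indep {a})
    (hcover : ∀ a : α, a ∈ M.E ↔ ∃ i, a ∈ E i)
    (hdisj : ∀ i j : Fin t, i ≠ j → Disjoint (E i) (E j))
    (hne : ∀ i, (E i).Nonempty)
    (hground : ∀ (i : Fin t) (a : α), a ∈ E i → a ∈ M.E)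
    (hpar : ∀ (i j : Fin t) (a b : α), a ∈ E i → b ∈ E j → a ≠ b →
      (M.Indep {a, b} ↔ i ≠ j))
    (hrank : ∀ B : Set α, M.IsBase B → B.ncard = 2)
    (hord : ∀ (k l : Fin t) (a b : α), a ∈ E k → b ∈ E l → k < l → a < b)
    (k l : Fin t) (x y : α) (hx : x ∈ E k) (hy : y ∈ E l) (hkl : k < l)
    (hB : M.IsBase {x, y}) :
    (0 < a1 E k l x y → ∃ (k' l' : Fin t) (x' y' : α), x' ∈ E k' ∧ y' ∈ E l' ∧ k' < l' ∧
      M.IsBase {x', y'} ∧ a1 E k' l' x' y' = a1 E k l x y - 1 ∧ a2 E l' y' = a2 E l y) ∧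
    (0 < a2 E l y → ∃ (k' l' : Fin t) (x' y' : α), x' ∈ E k' ∧ y' ∈ E l' ∧ k' < l' ∧
      M.IsBase {x', y'} ∧ a1 E k' l' x' y' = a1 E k l x y ∧ a2 E l' y' = a2 E l y - 1) := by
  constructor
  · -- decrease a1
    intro hA
    have hxS : x ∈ (Finset.Ico k l).biUnion E :=
      mem_biUnion.mpr ⟨k, mem_Ico.mpr ⟨le_refl k, hkl⟩, hx⟩
    have hynot : y ∉ (Finset.Ico k l).biUnion E :=
      not_mem_biUnion_of_class E hdisj hy (by simp)
    have hAeq : a1 E k l x y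
        = (((Finset.Ico k l).biUnion E).filter (fun v => x < v)).card :=
      a1_eq_of_not_mem E k l x y hynot
    have hlt : (((Finset.Ico k l).biUnion E).filter (fun v => x < v)).card
        < ((Finset.Ico k l).biUnion E).card := by
      apply card_lt_card
      refine ⟨filter_subset _ _, fun hsub => ?_⟩
      exact absurd (mem_filter.mp (hsub hxS)).2 (lt_irrefl x)
    obtain ⟨z, hzS, hzcard⟩ := exists_filter_lt_card (a1 E k l x y - 1)
      ((Finset.Ico k l).biUnion E) (by omega)
    obtain ⟨k', hk'mem, hzk'⟩ := mem_biUnion.mp hzS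
    rw [mem_Ico] at hk'mem
    have hzy : z ≠ y := fun e => hynot (e ▸ hzS)
    refine ⟨k', l, z, y, hzk', hy, hk'mem.2, ?_, ?_, rfl⟩
    · exact base_of_indep_two M hrank hzy
        ((hpar k' l z y hzk' hy hzy).mpr (ne_of_lt hk'mem.2))
    · have h1 : y ∉ (Finset.Ico k' l).biUnion E :=
        not_mem_biUnion_of_class E hdisj hy (by simp)
      rw [a1_eq_of_not_mem E k' l z y h1,
        ← filter_biUnion_restrict E hord hzk' hk'mem.1, hzcard]
  · -- decrease a2
    intro ha2
    have hWne : (((Finset.Ici l).biUnion E).filter (fun v => y < v)).Nonempty :=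
      card_pos.mp ha2
    set W := ((Finset.Ici l).biUnion E).filter (fun v => y < v) with hW
    set w := W.min' hWne with hwdef
    have hwW : w ∈ W := W.min'_mem hWne
    obtain ⟨hwU, hyw⟩ := mem_filter.mp hwW
    obtain ⟨m, hm, hwm⟩ := mem_biUnion.mp hwU
    rw [mem_Ici] at hm
    have hkm : k < m := lt_of_lt_of_le hkl hm
    -- a2 at the new pair
    have ha2new : (((Finset.Ici m).biUnion E).filter (fun v => w < v)) = W.erase w := by
      ext v
      simp only [hW, mem_erase, mem_filter, mem_biUnion, mem_Ici]
      constructor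
      · rintro ⟨⟨i, hmi, hvi⟩, hwv⟩
        exact ⟨(ne_of_gt hwv), ⟨i, hm.trans hmi, hvi⟩, hyw.trans hwv⟩
      · rintro ⟨hvw, ⟨i, hli, hvi⟩, hyv⟩
        have hvW : v ∈ W := mem_filter.mpr ⟨mem_biUnion.mpr ⟨i, mem_Ici.mpr hli, hvi⟩, hyv⟩
        have hwv : w ≤ v := W.min'_le v hvW
        have hwv' : w < v := lt_of_le_of_ne hwv (Ne.symm hvw)
        refine ⟨⟨i, ?_, hvi⟩, hwv'⟩
        by_contra him
        exact absurd (hord i m v w hvi hwm (not_le.mp him)) (not_lt.mpr hwv)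
    -- find z with exactly a1 elements above it in ⋃_{[k,m)} E
    have hxS : x ∈ (Finset.Ico k m).biUnion E :=
      mem_biUnion.mpr ⟨k, mem_Ico.mpr ⟨le_refl k, hkm⟩, hx⟩
    have hynotl : y ∉ (Finset.Ico k l).biUnion E :=
      not_mem_biUnion_of_class E hdisj hy (by simp)
    have hAeq : a1 E k l x y
        = (((Finset.Ico k l).biUnion E).filter (fun v => x < v)).card :=
      a1_eq_of_not_mem E k l x y hynotl
    have hsub : ((Finset.Ico k l).biUnion E).filter (fun v => x < v)
        ⊆ ((Finset.Ico k m).biUnion E).filter (fun v => x < v) :=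
      filter_subset_filter _ (biUnion_subset_biUnion_of_subset_left E
        (Finset.Ico_subset_Ico le_rfl hm))
    have hle : a1 E k l x y
        ≤ (((Finset.Ico k m).biUnion E).filter (fun v => x < v)).card := by
      rw [hAeq]; exact card_le_card hsub
    have hlt : (((Finset.Ico k m).biUnion E).filter (fun v => x < v)).card
        < ((Finset.Ico k m).biUnion E).card := by
      apply card_lt_card
      refine ⟨filter_subset _ _, fun hsub2 => ?_⟩
      exact absurd (mem_filter.mp (hsub2 hxS)).2 (lt_irrefl x)
    obtain ⟨z, hzS, hzcard⟩ := exists_filter_lt_card (a1 E k l x y)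
      ((Finset.Ico k m).biUnion E) (by omega)
    obtain ⟨k', hk'mem, hzk'⟩ := mem_biUnion.mp hzS
    rw [mem_Ico] at hk'mem
    have hwnot : w ∉ (Finset.Ico k m).biUnion E :=
      not_mem_biUnion_of_class E hdisj hwm (by simp)
    have hzw : z ≠ w := fun e => hwnot (e ▸ hzS)
    refine ⟨k', m, z, w, hzk', hwm, hk'mem.2, ?_, ?_, ?_⟩
    · exact base_of_indep_two M hrank hzw
        ((hpar k' m z w hzk' hwm hzw).mpr (ne_of_lt hk'mem.2))
    · have h1 : w ∉ (Finset.Ico k' m).biUnion E :=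
        not_mem_biUnion_of_class E hdisj hwm (by simp)
      rw [a1_eq_of_not_mem E k' m z w h1,
        ← filter_biUnion_restrict E hord hzk' hk'mem.1, hzcard]
    · show (((Finset.Ici m).biUnion E).filter (fun v => w < v)).card = W.card - 1
      rw [ha2new, card_erase_of_mem hwW]
end

section
/- With M a loopless rank-2 matroid with ordered parallelism classes E_1,...,E_t and u_i the smallest element of E_i: for every basis B = {v_i, v_j} with v_j ∈ E_ℓ, the monomial x_1^{a_1(B)} x_2^{a_2(B)} divides x_1^{a_1(B̃)} x_2^{a_2(B̃)} where B̃ = {u_1, u_ℓ}, and deg(x_1^{a_1(B̃)} x_2^{a_2(B̃)}) = |E_1| + ... + |E_t| - 2 independently of ℓ. Consequently all maximal monomials in {x_1^{a_1(B)} x_2^{a_2(B)} : B a basis} have the same degree. -/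
open Finset

theorem stmt7 {α : Type*} [Fintype α] [LinearOrder α] {t : ℕ} (ht : 2 ≤ t)
    (M : Matroid α) (E : Fin t → Finset α)
    (hloop : ∀ a : α, a ∈ M.E → M.Indep {a})
    (hcover : ∀ a : α, a ∈ M.E ↔ ∃ i, a ∈ E i)
    (hdisj : ∀ i j : Fin t, i ≠ j → Disjoint (E i) (E j))
    (hne : ∀ i, (E i).Nonempty)
    (hground : ∀ (i : Fin t) (a : α), a ∈ E i → a ∈ M.E)
    (hpar : ∀ (i j : Fin t) (a b : α), a ∈ E i → b ∈ E j → a ≠ b →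
      (M.Indep {a, b} ↔ i ≠ j))
    (hrank : ∀ B : Set α, M.IsBase B → B.ncard = 2)
    (hord : ∀ (k l : Fin t) (a b : α), a ∈ E k → b ∈ E l → k < l → a < b)
    (u : Fin t → α) (hu : ∀ i, u i ∈ E i) (humin : ∀ i, ∀ v ∈ E i, u i ≤ v) :
    (∀ (k l : Fin t) (x y : α), x ∈ E k → y ∈ E l → k < l → M.IsBase {x, y} →
      a1 E k l x y ≤ a1 E ⟨0, by omega⟩ l (u ⟨0, by omega⟩) (u l) ∧
      a2 E l y ≤ a2 E l (u l) ∧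
      a1 E ⟨0, by omega⟩ l (u ⟨0, by omega⟩) (u l) + a2 E l (u l)
        = (∑ i, (E i).card) - 2) ∧
    (∀ p ∈ {q : ℕ × ℕ | ∃ (k l : Fin t) (x y : α), x ∈ E k ∧ y ∈ E l ∧ k < l ∧
        M.IsBase {x, y} ∧ q = (a1 E k l x y, a2 E l y)},
      (∀ q ∈ {q : ℕ × ℕ | ∃ (k l : Fin t) (x y : α), x ∈ E k ∧ y ∈ E l ∧ k < l ∧
        M.IsBase {x, y} ∧ q = (a1 E k l x y, a2 E l y)},
        p.1 ≤ q.1 ∧ p.2 ≤ q.2 → q = p) →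
      p.1 + p.2 = (∑ i, (E i).card) - 2) := by
  have ht0 : 0 < t := by omega
  have hz : ∀ i : Fin t, (⟨0, ht0⟩ : Fin t) ≤ i := fun i => by
    simp [Fin.le_def]
  set z : Fin t := ⟨0, ht0⟩ with hzdef
  -- a1 comparison
  have ha1_le : ∀ (k l : Fin t) (x y : α), x ∈ E k → y ∈ E l → k < l →
      a1 E k l x y ≤ a1 E z l (u z) (u l) := by
    intro k l x y hx hy hkl
    apply Finset.card_le_card
    intro v hv
    simp only [a1, Finset.mem_filter, Finset.mem_biUnion, Finset.mem_Ico] at hv ⊢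
    obtain ⟨⟨i, ⟨hki, hil⟩, hvi⟩, hxv, hvy⟩ := hv
    refine ⟨⟨i, ⟨hz i, hil⟩, hvi⟩, ?_, ?_⟩
    · rcases (hz i).lt_or_eq with h0 | h0
      · exact hord z i (u z) v (hu z) hvi h0
      · have hk : k = z := le_antisymm (h0 ▸ hki) (hz k)
        have hx' : x ∈ E z := by rw [← hk]; exact hx
        exact lt_of_le_of_lt (humin z x hx') hxv
    · exact ne_of_lt (hord i l v (u l) hvi (hu l) hil)
  -- a1 value at the minimum
  have ha1_eq : ∀ l : Fin t, z < l →
      a1 E z l (u z) (u l) = (∑ i ∈ Finset.Iio l, (E i).card) - 1 := by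
    intro l hl
    have hIco : Finset.Ico z l = Finset.Iio l := by
      ext i; simp [Finset.mem_Ico, Finset.mem_Iio, hz i]
    have hfilter : ((Finset.Iio l).biUnion E).filter (fun v => u z < v ∧ v ≠ u l)
        = ((Finset.Iio l).biUnion E).erase (u z) := by
      ext v
      simp only [Finset.mem_filter, Finset.mem_erase, Finset.mem_biUnion, Finset.mem_Iio]
      constructor
      · rintro ⟨⟨i, hil, hvi⟩, hlt, _⟩
        exact ⟨ne_of_gt hlt, i, hil, hvi⟩
      · rintro ⟨hne', i, hil, hvi⟩
        refine ⟨⟨i, hil, hvi⟩, ?_, ne_of_lt (hord i l v (u l) hvi (hu l) hil)⟩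
        rcases (hz i).lt_or_eq with h0 | h0
        · exact hord z i (u z) v (hu z) hvi h0
        · exact lt_of_le_of_ne (humin z v (by rw [h0]; exact hvi)) (Ne.symm hne')
    rw [a1, hIco, hfilter, Finset.card_erase_of_mem
        (Finset.mem_biUnion.mpr ⟨z, Finset.mem_Iio.mpr hl, hu z⟩),
      Finset.card_biUnion (fun i _ j _ hij => hdisj i j hij)]
  -- a2 comparison
  have ha2_le : ∀ (l : Fin t) (y : α), y ∈ E l → a2 E l y ≤ a2 E l (u l) := by
    intro l y hy
    apply Finset.card_le_card
    intro v hv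
    simp only [a2, Finset.mem_filter] at hv ⊢
    exact ⟨hv.1, lt_of_le_of_lt (humin l y hy) hv.2⟩
  -- a2 value at the minimum
  have ha2_eq : ∀ l : Fin t,
      a2 E l (u l) = (∑ i ∈ Finset.Ici l, (E i).card) - 1 := by
    intro l
    have hfilter : ((Finset.Ici l).biUnion E).filter (fun v => u l < v)
        = ((Finset.Ici l).biUnion E).erase (u l) := by
      ext v
      simp only [Finset.mem_filter, Finset.mem_erase, Finset.mem_biUnion, Finset.mem_Ici]
      constructor
      · rintro ⟨⟨i, hil, hvi⟩, hlt⟩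
        exact ⟨ne_of_gt hlt, i, hil, hvi⟩
      · rintro ⟨hne', i, hil, hvi⟩
        refine ⟨⟨i, hil, hvi⟩, ?_⟩
        rcases hil.lt_or_eq with h0 | h0
        · exact hord l i (u l) v (hu l) hvi h0
        · exact lt_of_le_of_ne (humin l v (by rw [h0]; exact hvi)) (Ne.symm hne')
    rw [a2, hfilter, Finset.card_erase_of_mem
        (Finset.mem_biUnion.mpr ⟨l, Finset.mem_Ici.mpr le_rfl, hu l⟩),
      Finset.card_biUnion (fun i _ j _ hij => hdisj i j hij)]
  -- split of the total sum
  have hsum : ∀ l : Fin t, (∑ i ∈ Finset.Iio l, (E i).card)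
      + (∑ i ∈ Finset.Ici l, (E i).card) = ∑ i, (E i).card := by
    intro l
    rw [← Finset.sum_union (by
      simp only [Finset.disjoint_left, Finset.mem_Iio, Finset.mem_Ici]
      exact fun i hi hi' => absurd hi' (not_le.mpr hi))]
    congr 1
    ext i
    simp [lt_or_ge i l]
  have hlow : ∀ l : Fin t, z < l → 1 ≤ ∑ i ∈ Finset.Iio l, (E i).card := by
    intro l hl
    calc 1 ≤ (E z).card := Finset.card_pos.mpr (hne z)
    _ ≤ _ := Finset.single_le_sum (f := fun i => (E i).card)
        (fun _ _ => Nat.zero_le _) (Finset.mem_Iio.mpr hl)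
  have hhigh : ∀ l : Fin t, 1 ≤ ∑ i ∈ Finset.Ici l, (E i).card := by
    intro l
    calc 1 ≤ (E l).card := Finset.card_pos.mpr (hne l)
    _ ≤ _ := Finset.single_le_sum (f := fun i => (E i).card)
        (fun _ _ => Nat.zero_le _) (Finset.mem_Ici.mpr le_rfl)
  -- the canonical pair is a base
  have hbase : ∀ l : Fin t, z < l → M.IsBase {u z, u l} := by
    intro l hl
    have hne' : u z ≠ u l := ne_of_lt (hord z l _ _ (hu z) (hu l) hl)
    have hind : M.Indep {u z, u l} := (hpar z l _ _ (hu z) (hu l) hne').mpr (ne_of_lt hl)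
    obtain ⟨B, hB, hsub⟩ := hind.exists_isBase_superset
    have h2 : B.ncard = 2 := hrank B hB
    have h2' : ({u z, u l} : Set α).ncard = 2 := Set.ncard_pair hne'
    have hBeq : ({u z, u l} : Set α) = B :=
      Set.eq_of_subset_of_ncard_le hsub (by rw [h2, h2'])
    rw [hBeq]; exact hB
  constructor
  · intro k l x y hx hy hkl _
    have hzl : z < l := lt_of_le_of_lt (hz k) hkl
    refine ⟨ha1_le k l x y hx hy hkl, ha2_le l y hy, ?_⟩
    rw [ha1_eq l hzl, ha2_eq l]
    have := hsum l
    have h1 := hlow l hzl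
    have h2 := hhigh l
    omega
  · rintro p ⟨k, l, x, y, hx, hy, hkl, hB, rfl⟩ hmax
    have hzl : z < l := lt_of_le_of_lt (hz k) hkl
    have hq : ((a1 E z l (u z) (u l), a2 E l (u l)) : ℕ × ℕ) ∈
        {q : ℕ × ℕ | ∃ (k l : Fin t) (x y : α), x ∈ E k ∧ y ∈ E l ∧ k < l ∧
          M.IsBase {x, y} ∧ q = (a1 E k l x y, a2 E l y)} :=
      ⟨z, l, u z, u l, hu z, hu l, hzl, hbase l hzl, rfl⟩
    have heq := hmax _ hq ⟨ha1_le k l x y hx hy hkl, ha2_le l y hy⟩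
    have h1 : a1 E z l (u z) (u l) = a1 E k l x y := congrArg Prod.fst heq
    have h2 : a2 E l (u l) = a2 E l y := congrArg Prod.snd heq
    have e1 := ha1_eq l hzl
    have e2 := ha2_eq l
    have := hsum l
    have hl1 := hlow l hzl
    have hl2 := hhigh l
    simp only [← h1, ← h2, e1, e2]
    omega
end

section
/- For positive integers s_1,...,s_t and an integer d with t ≥ d, the vector (1, h_1, h_2, h_3) is a pure O-sequence, where h_1 = Σ(s_i - 1) + (t-d), h_2 = Σ_{i<j}(s_i-1)(s_j-1) + (t-d)Σ(s_i-1) + C(t-d+1, 2), and h_3 = Σ_{i<j<k}(s_i-1)(s_j-1)(s_k-1) + (t-d)Σ_{i<j}(s_i-1)(s_j-1) + C(t-d+1,2)Σ(s_i-1) + C(t-d+2, 3). -/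
open Finset

namespace Stmt8Aux

/-- code of the `a`-th variable of class `i` (there are `t` classes). -/
def cd (t i a : ℕ) : ℕ := 2*(t*a+i)

lemma cd_even (t i a : ℕ) : cd t i a % 2 = 0 := by unfold cd; omega

lemma cd_mod {t i : ℕ} (hi : i < t) (a : ℕ) : cd t i a % (2*t) = 2*i := by
  unfold cd
  rw [Nat.mul_mod_mul_left]
  congr 1
  rw [Nat.mul_add_mod]
  exact Nat.mod_eq_of_lt hi

lemma cd_inj {t i a j b : ℕ} (hi : i < t) (hj : j < t) (h : cd t i a = cd t j b) :
    i = j ∧ a = b := by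
  have h' : t*a+i = t*b+j := by unfold cd at h; omega
  have hij : i = j := by
    have h1 : (t*a+i) % t = i := by rw [Nat.mul_add_mod]; exact Nat.mod_eq_of_lt hi
    have h2 : (t*b+j) % t = j := by rw [Nat.mul_add_mod]; exact Nat.mod_eq_of_lt hj
    rw [h'] at h1; omega
  refine ⟨hij, ?_⟩
  subst hij
  have ht : 0 < t := by omega
  have : t*a = t*b := by omega
  exact Nat.eq_of_mul_eq_mul_left ht this

variable (t u : ℕ) (S : ℕ → ℕ)

def VC : Finset ℕ := (range t).biUnion fun i => (range (S i)).image fun a => cd t i a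

def VF : Finset ℕ := (range u).image fun j => 2*j+1

lemma mem_VC {x : ℕ} : x ∈ VC t S ↔ ∃ i, i < t ∧ ∃ a, a < S i ∧ x = cd t i a := by
  simp [VC, eq_comm]

lemma mem_VF {x : ℕ} : x ∈ VF u ↔ ∃ j, j < u ∧ x = 2*j+1 := by
  simp [VF, eq_comm]

lemma VC_even {x : ℕ} (hx : x ∈ VC t S) : x % 2 = 0 := by
  obtain ⟨i, _, a, _, rfl⟩ := (mem_VC t S).1 hx; exact cd_even t i a

lemma VF_odd {x : ℕ} (hx : x ∈ VF u) : x % 2 = 1 := by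
  obtain ⟨j, _, rfl⟩ := (mem_VF u).1 hx; omega

lemma card_VC : (VC t S).card = ∑ i ∈ range t, S i := by
  rw [VC, card_biUnion]
  · refine Finset.sum_congr rfl fun i hi => ?_
    rw [card_image_of_injOn, card_range]
    intro a _ b _ hab
    exact (cd_inj (mem_range.1 hi) (mem_range.1 hi) hab).2
  · intro i hi j hj hij
    simp only [Finset.disjoint_left, mem_image, mem_range]
    rintro x ⟨a, _, rfl⟩ ⟨b, _, hb⟩
    exact hij ((cd_inj (mem_range.1 hj) (mem_range.1 hi) hb).1).symm

lemma card_VF : (VF u).card = u := by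
  rw [VF, card_image_of_injOn, card_range]
  intro a _ b _ h; simp only [] at h; omega

/- mdeg basics -/
lemma mdeg_add (a b : ℕ →₀ ℕ) : mdeg (a + b) = mdeg a + mdeg b :=
  Finsupp.sum_add_index' (fun _ => rfl) (fun _ _ _ => rfl)

lemma mdeg_single (x n : ℕ) : mdeg (Finsupp.single x n) = n :=
  Finsupp.sum_single_index rfl

lemma mdeg_eq_sum (m : ℕ →₀ ℕ) : mdeg m = ∑ x ∈ m.support, m x := rfl

lemma apply_le_mdeg (m : ℕ →₀ ℕ) (x : ℕ) : m x ≤ mdeg m := by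
  by_cases hx : x ∈ m.support
  · rw [mdeg_eq_sum]
    exact Finset.single_le_sum (fun _ _ => Nat.zero_le _) hx
  · simp [Finsupp.notMem_support_iff.1 hx]

lemma mdeg_mono {n m : ℕ →₀ ℕ} (h : n ≤ m) : mdeg n ≤ mdeg m := by
  rw [mdeg_eq_sum, mdeg_eq_sum,
    Finset.sum_subset (Finsupp.support_mono h) (fun x _ hx => Finsupp.notMem_support_iff.1 hx)]
  exact Finset.sum_le_sum fun x _ => Finsupp.le_def.1 h x

lemma mdeg_eq_zero {m : ℕ →₀ ℕ} (h : mdeg m = 0) : m = 0 := by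
  ext x
  have := apply_le_mdeg m x
  simp only [Finsupp.coe_zero, Pi.zero_apply]
  omega

lemma mdeg_eq_card {m : ℕ →₀ ℕ} (h : ∀ x ∈ m.support, m x = 1) : mdeg m = m.support.card := by
  rw [mdeg_eq_sum, Finset.card_eq_sum_ones]
  exact Finset.sum_congr rfl h

/-- The witness order ideal. -/
def O : Set (ℕ →₀ ℕ) :=
  { m | (↑m.support : Set ℕ) ⊆ ↑(VC t S ∪ VF u) ∧ (∀ x, x % 2 = 0 → m x ≤ 1) ∧
      (∀ x ∈ m.support, ∀ y ∈ m.support, x % 2 = 0 → y % 2 = 0 → x % (2*t) = y % (2*t) → x = y) ∧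
      mdeg m ≤ 3 }

lemma zero_mem_O : 0 ∈ O t u S := by
  refine ⟨by simp, by simp, by simp, by simp [mdeg]⟩

lemma isOrderIdeal_O : IsOrderIdeal (O t u S) := by
  rintro m ⟨h1, h2, h3, h4⟩ n hle
  have hsupp := Finsupp.support_mono hle
  refine ⟨fun x hx => h1 (hsupp hx), fun x hx => le_trans (Finsupp.le_def.1 hle x) (h2 x hx),
    fun x hx y hy => h3 x (hsupp hx) y (hsupp hy), le_trans (mdeg_mono hle) h4⟩

lemma finite_O : (O t u S).Finite := by
  refine Set.Finite.subset (Finset.Iic ((VC t S ∪ VF u).sum fun x => Finsupp.single x 3)).finite_toSet ?_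
  rintro m ⟨h1, _, _, h4⟩
  simp only [coe_Iic, Set.mem_Iic]
  rw [Finsupp.le_def]
  intro x
  by_cases hx : x ∈ m.support
  · have hxm : x ∈ VC t S ∪ VF u := h1 hx
    have : ((VC t S ∪ VF u).sum fun y => Finsupp.single y 3) x = 3 := by
      rw [Finset.sum_apply']
      rw [Finset.sum_eq_single x]
      · simp
      · intro y _ hy; simp [Finsupp.single_apply, hy]
      · intro h; exact absurd hxm h
    rw [this]
    exact le_trans (apply_le_mdeg m x) h4
  · simp [Finsupp.notMem_support_iff.1 hx]

end Stmt8Aux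

namespace Stmt8Aux
variable (t u : ℕ) (S : ℕ → ℕ)

lemma even_apply_add_single_odd (m : ℕ →₀ ℕ) {x : ℕ} (hx : x % 2 = 0) :
    (m + Finsupp.single 1 1 : ℕ →₀ ℕ) x = m x := by
  rw [Finsupp.add_apply, Finsupp.single_apply]
  have : (1:ℕ) ≠ x := by omega
  simp [this]

lemma maximal_mdeg_of_pos (hu : 0 < u) {m : ℕ →₀ ℕ} (hm : m ∈ O t u S)
    (hmax : ∀ n ∈ O t u S, m ≤ n → n = m) : mdeg m = 3 := by
  obtain ⟨h1, h2, h3, h4⟩ := hm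
  by_contra hne
  have hlt : mdeg m < 3 := lt_of_le_of_ne h4 hne
  set n := m + Finsupp.single 1 1 with hn
  have h1f : (1:ℕ) ∈ VF u := (mem_VF u).2 ⟨0, hu, by norm_num⟩
  have hmem : ∀ x, x % 2 = 0 → x ∈ n.support → x ∈ m.support := by
    intro x hx hxs
    rw [Finsupp.mem_support_iff] at hxs ⊢
    rwa [even_apply_add_single_odd m hx] at hxs
  have hnO : n ∈ O t u S := by
    refine ⟨?_, ?_, ?_, ?_⟩
    · intro x hx
      have hx' := Finsupp.support_add hx
      rcases Finset.mem_union.1 hx' with h | h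
      · exact h1 h
      · have : x = 1 := by simpa using Finsupp.support_single_subset h
        subst this
        exact Finset.mem_coe.2 (Finset.mem_union_right _ h1f)
    · intro x hx
      rw [even_apply_add_single_odd m hx]
      exact h2 x hx
    · intro x hxs y hys hx hy hcl
      exact h3 x (hmem x hx hxs) y (hmem y hy hys) hx hy hcl
    · rw [hn, mdeg_add, mdeg_single]; omega
  have heq := hmax n hnO (le_add_of_nonneg_right (zero_le))
  have : n 1 = m 1 := by rw [heq]
  simp [hn, Finsupp.add_apply, Finsupp.single_apply] at this

lemma maximal_mdeg_of_zero (hu : u = 0) {m : ℕ →₀ ℕ} (hm : m ∈ O t u S)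
    (hmax : ∀ n ∈ O t u S, m ≤ n → n = m) :
    mdeg m = min 3 ((range t).filter fun i => 1 ≤ S i).card := by
  obtain ⟨h1, h2, h3, h4⟩ := hm
  set NE := (range t).filter fun i => 1 ≤ S i with hNE
  have hVC : ∀ x ∈ m.support, x ∈ VC t S := by
    intro x hx
    have := h1 hx
    rcases Finset.mem_union.1 this with h | h
    · exact h
    · exact absurd h (by simp [VF, hu])
  have heven : ∀ x ∈ m.support, x % 2 = 0 := fun x hx => VC_even t S (hVC x hx)
  have hone : ∀ x ∈ m.support, m x = 1 := by
    intro x hx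
    have := h2 x (heven x hx)
    have := Finsupp.mem_support_iff.1 hx
    omega
  have hcard : mdeg m = m.support.card := mdeg_eq_card hone
  set U := m.support.image (fun x => x % (2*t)) with hU
  have hUcard : U.card = m.support.card :=
    card_image_of_injOn (fun x hx y hy hxy => h3 x hx y hy (heven x hx) (heven y hy) hxy)
  have hUsub : U ⊆ NE.image (fun i => 2*i) := by
    intro r hr
    obtain ⟨x, hx, rfl⟩ := mem_image.1 hr
    obtain ⟨i, hi, a, ha, rfl⟩ := (mem_VC t S).1 (hVC x hx)
    rw [cd_mod hi]
    exact mem_image.2 ⟨i, mem_filter.2 ⟨mem_range.2 hi, by omega⟩, rfl⟩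
  have him : (NE.image (fun i => 2*i)).card = NE.card :=
    card_image_of_injOn (by intro a _ b _ h; simp only [] at h; omega)
  have hub : mdeg m ≤ min 3 NE.card := by
    refine le_min h4 ?_
    rw [hcard, ← hUcard]
    exact him ▸ card_le_card hUsub
  rcases eq_or_lt_of_le hub with h | hlt
  · exact h
  exfalso
  obtain ⟨r, hrim, hrU⟩ : ∃ r ∈ NE.image (fun i => 2*i), r ∉ U := by
    apply Finset.exists_of_ssubset
    refine lt_of_le_of_ne hUsub ?_
    intro h
    rw [h, him] at hUcard
    rw [hcard, ← hUcard] at hlt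
    omega
  obtain ⟨i, hiNE, rfl⟩ := mem_image.1 hrim
  obtain ⟨hit, hiS⟩ := mem_filter.1 hiNE
  rw [mem_range] at hit
  have hcd : cd t i 0 = 2*i := by show 2*(t*0+i) = 2*i; omega
  have hm2i : m (2*i) = 0 := by
    by_contra h
    exact hrU (mem_image.2 ⟨2*i, Finsupp.mem_support_iff.2 h, Nat.mod_eq_of_lt (by omega)⟩)
  set n := m + Finsupp.single (2*i) 1 with hn
  have hsub : n.support ⊆ m.support ∪ {2*i} := by
    intro x hx
    have := Finsupp.support_add hx
    rcases Finset.mem_union.1 this with h | h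
    · exact Finset.mem_union_left _ h
    · exact Finset.mem_union_right _ (Finsupp.support_single_subset h)
  have hnO : n ∈ O t u S := by
    refine ⟨?_, ?_, ?_, ?_⟩
    · intro x hx
      rcases Finset.mem_union.1 (hsub hx) with h | h
      · exact h1 h
      · have : x = 2*i := by simpa using h
        subst this
        exact Finset.mem_coe.2 (Finset.mem_union_left _ ((mem_VC t S).2 ⟨i, hit, 0, by omega, hcd.symm⟩))
    · intro x hx
      rw [hn, Finsupp.add_apply, Finsupp.single_apply]
      by_cases hxe : 2*i = x
      · subst hxe; simp [hm2i]
      · simp only [hxe, if_false]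
        have := h2 x hx; omega
    · intro x hxs y hys hx hy hcl
      rcases Finset.mem_union.1 (hsub hxs) with hxm | hxm <;>
        rcases Finset.mem_union.1 (hsub hys) with hym | hym
      · exact h3 x hxm y hym hx hy hcl
      · exfalso
        have hy2i : y = 2*i := by simpa using hym
        apply hrU
        rw [← Nat.mod_eq_of_lt (show 2*i < 2*t by omega), ← hy2i, ← hcl]
        exact mem_image.2 ⟨x, hxm, rfl⟩
      · exfalso
        have hx2i : x = 2*i := by simpa using hxm
        apply hrU
        rw [← Nat.mod_eq_of_lt (show 2*i < 2*t by omega), ← hx2i, hcl]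
        exact mem_image.2 ⟨y, hym, rfl⟩
      · have : x = 2*i := by simpa using hxm
        have : y = 2*i := by simpa using hym
        omega
    · rw [hn, mdeg_add, mdeg_single]
      have : mdeg m < 3 := lt_of_lt_of_le hlt (min_le_left _ _)
      omega
  have heq := hmax n hnO (le_add_of_nonneg_right (zero_le))
  have : n (2*i) = m (2*i) := by rw [heq]
  simp [hn, Finsupp.add_apply, Finsupp.single_apply, hm2i] at this

end Stmt8Aux

namespace Stmt8Aux
variable (t u : ℕ) (S : ℕ → ℕ)

def emb (u : ℕ) : Fin u ↪ ℕ :=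
  ⟨fun j => 2*(j:ℕ)+1, by intro a b h; simp only [] at h; exact Fin.ext (by omega)⟩

noncomputable def frMap (q : ℕ) (σ : Sym (Fin u) q) : ℕ →₀ ℕ :=
  Finsupp.embDomain (emb u) (Multiset.toFinsupp σ.1)

lemma frMap_injective (q : ℕ) : Function.Injective (frMap u q) := by
  intro σ τ h
  exact Subtype.ext (Multiset.toFinsupp.injective (Finsupp.embDomain_injective (emb u) h))

noncomputable def FrF (q : ℕ) : Finset (ℕ →₀ ℕ) := Finset.univ.image (frMap u q)

lemma card_FrF (q : ℕ) : (FrF u q).card = (u + q - 1).choose q := by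
  rw [FrF, card_image_of_injective _ (frMap_injective u q), card_univ,
    Sym.card_sym_eq_multichoose, Fintype.card_fin, Nat.multichoose_eq]

lemma mem_FrF_iff {q : ℕ} {f : ℕ →₀ ℕ} :
    f ∈ FrF u q ↔ (f.support ⊆ VF u ∧ mdeg f = q) := by
  constructor
  · intro hf
    obtain ⟨σ, _, rfl⟩ := mem_image.1 hf
    constructor
    · rw [frMap, Finsupp.support_embDomain]
      intro x hx
      obtain ⟨j, _, rfl⟩ := Finset.mem_map.1 hx
      exact (mem_VF u).2 ⟨j, j.2, rfl⟩
    · rw [frMap, mdeg, Finsupp.sum_embDomain]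
      have : (Multiset.toFinsupp σ.1).sum (fun _ e => e) = Multiset.card σ.1 :=
        Multiset.toFinsupp_sum_eq σ.1
      rw [this, σ.2]
  · rintro ⟨hsupp, hdeg⟩
    have hrange : ↑f.support ⊆ Set.range (emb u) := by
      intro x hx
      obtain ⟨j, hj, rfl⟩ := (mem_VF u).1 (hsupp hx)
      exact ⟨⟨j, hj⟩, rfl⟩
    set g := Finsupp.comapDomain (emb u) f (emb u).injective.injOn with hg
    have hfg : Finsupp.embDomain (emb u) g = f := Finsupp.embDomain_comapDomain hrange
    have hcard : Multiset.card (Finsupp.toMultiset g) = q := by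
      rw [Finsupp.card_toMultiset]
      have : mdeg f = g.sum fun _ e => e := by
        rw [← hfg, mdeg, Finsupp.sum_embDomain]
      rw [← hdeg, this]; rfl
    refine mem_image.2 ⟨⟨Finsupp.toMultiset g, hcard⟩, mem_univ _, ?_⟩
    show Finsupp.embDomain (emb u) (Multiset.toFinsupp (Finsupp.toMultiset g)) = f
    simp only [Finsupp.toMultiset_toFinsupp]
    exact hfg

end Stmt8Aux

namespace Stmt8Aux

/- sorting / rigidity helpers -/
lemma pair_mem {x1 x2 y1 y2 : ℕ} (h : ({x1, x2} : Finset ℕ) = {y1, y2}) :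
    x1 = y1 ∨ x1 = y2 := by
  have : x1 ∈ ({y1, y2} : Finset ℕ) := h ▸ (by simp)
  simpa using this

lemma pair_eq {c : ℕ → ℕ} {x1 x2 y1 y2 : ℕ} (hx : c x1 < c x2) (hy : c y1 < c y2)
    (h : ({x1, x2} : Finset ℕ) = {y1, y2}) : x1 = y1 ∧ x2 = y2 := by
  rcases pair_mem h with h1 | h1
  · refine ⟨h1, ?_⟩
    rcases pair_mem (show ({x2, x1} : Finset ℕ) = {y2, y1} by
      rw [Finset.pair_comm x2 x1, Finset.pair_comm y2 y1]; exact h) with h2 | h2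
    · exact h2
    · exfalso; have := congrArg c h1; have := congrArg c h2; omega
  · exfalso
    rcases pair_mem h.symm with h2 | h2
    · have := congrArg c h1; have := congrArg c h2; omega
    · have := congrArg c h1; have := congrArg c h2; omega

lemma triple_mem {x1 x2 x3 y1 y2 y3 : ℕ} (h : ({x1, x2, x3} : Finset ℕ) = {y1, y2, y3}) :
    x1 = y1 ∨ x1 = y2 ∨ x1 = y3 := by
  have : x1 ∈ ({y1, y2, y3} : Finset ℕ) := h ▸ (by simp)
  simpa using this

lemma triple_eq {c : ℕ → ℕ} {x1 x2 x3 y1 y2 y3 : ℕ}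
    (hx1 : c x1 < c x2) (hx2 : c x2 < c x3) (hy1 : c y1 < c y2) (hy2 : c y2 < c y3)
    (h : ({x1, x2, x3} : Finset ℕ) = {y1, y2, y3}) : x1 = y1 ∧ x2 = y2 ∧ x3 = y3 := by
  have m2 : x2 = y1 ∨ x2 = y2 ∨ x2 = y3 := by
    have : x2 ∈ ({y1, y2, y3} : Finset ℕ) := h ▸ (by simp); simpa using this
  have m3 : x3 = y1 ∨ x3 = y2 ∨ x3 = y3 := by
    have : x3 ∈ ({y1, y2, y3} : Finset ℕ) := h ▸ (by simp); simpa using this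
  have h1 : x1 = y1 := by
    rcases triple_mem h with h1 | h1 | h1
    · exact h1
    all_goals {
      exfalso
      rcases triple_mem h.symm with h2 | h2 | h2 <;>
        · have := congrArg c h1; have := congrArg c h2; omega }
  refine ⟨h1, ?_, ?_⟩
  · rcases m2 with h2 | h2 | h2
    · exfalso; have := congrArg c h1; have := congrArg c h2; omega
    · exact h2
    · exfalso
      rcases m3 with h3 | h3 | h3 <;>
        · have := congrArg c h1; have := congrArg c h2; have := congrArg c h3; omega
  · rcases m3 with h3 | h3 | h3
    · exfalso; have := congrArg c h1; have := congrArg c h3; omega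
    · exfalso
      rcases m2 with h2 | h2 | h2 <;>
        · have := congrArg c h1; have := congrArg c h2; have := congrArg c h3; omega
    · exact h3

lemma sort3 {c : ℕ → ℕ} {a b e : ℕ} (h1 : c a ≠ c b) (h2 : c a ≠ c e) (h3 : c b ≠ c e) :
    ∃ x y z, c x < c y ∧ c y < c z ∧ ({x, y, z} : Finset ℕ) = {a, b, e} := by
  rcases Nat.lt_or_ge (c a) (c b) with hab | hab <;>
    rcases Nat.lt_or_ge (c a) (c e) with hae | hae <;>
      rcases Nat.lt_or_ge (c b) (c e) with hbe | hbe
  · exact ⟨a, b, e, hab, hbe, rfl⟩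
  · exact ⟨a, e, b, hae, by omega, by ext w; simp; tauto⟩
  · exact ⟨a, b, e, hab, hbe, rfl⟩
  · exact ⟨e, a, b, by omega, hab, by ext w; simp; tauto⟩
  · exact ⟨b, a, e, by omega, hae, by ext w; simp; tauto⟩
  · exact ⟨b, a, e, by omega, hae, by ext w; simp; tauto⟩
  · exact ⟨b, e, a, hbe, by omega, by ext w; simp; tauto⟩
  · exact ⟨e, b, a, by omega, by omega, by ext w; simp; tauto⟩

/- monomials which are sums of distinct singles -/
lemma eq_single_of {m : ℕ →₀ ℕ} {x : ℕ} (hsupp : m.support = {x})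
    (hone : ∀ w ∈ m.support, m w = 1) : m = Finsupp.single x 1 := by
  ext v
  rw [Finsupp.single_apply]
  by_cases hv : v = x
  · subst hv; simp only [if_pos rfl]; exact hone v (by rw [hsupp]; simp)
  · rw [if_neg (fun h => hv h.symm)]
    have : v ∉ m.support := by rw [hsupp]; simp [hv]
    exact Finsupp.notMem_support_iff.1 this

lemma eq_two_of {m : ℕ →₀ ℕ} {x y : ℕ} (hsupp : m.support = {x, y}) (hxy : x ≠ y)
    (hone : ∀ w ∈ m.support, m w = 1) :
    m = Finsupp.single x 1 + Finsupp.single y 1 := by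
  ext v
  rw [Finsupp.add_apply, Finsupp.single_apply, Finsupp.single_apply]
  by_cases hvx : v = x
  · subst hvx
    rw [if_pos rfl, if_neg (fun h => hxy h.symm)]
    exact hone v (by rw [hsupp]; simp)
  by_cases hvy : v = y
  · subst hvy
    rw [if_neg (fun h => hvx h.symm), if_pos rfl]
    exact hone v (by rw [hsupp]; simp)
  · rw [if_neg (fun h => hvx h.symm), if_neg (fun h => hvy h.symm)]
    have : v ∉ m.support := by rw [hsupp]; simp [hvx, hvy]
    exact Finsupp.notMem_support_iff.1 this

lemma eq_three_of {m : ℕ →₀ ℕ} {x y z : ℕ} (hsupp : m.support = {x, y, z})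
    (hxy : x ≠ y) (hxz : x ≠ z) (hyz : y ≠ z)
    (hone : ∀ w ∈ m.support, m w = 1) :
    m = Finsupp.single x 1 + Finsupp.single y 1 + Finsupp.single z 1 := by
  ext v
  rw [Finsupp.add_apply, Finsupp.add_apply, Finsupp.single_apply, Finsupp.single_apply,
    Finsupp.single_apply]
  by_cases hvx : v = x
  · subst hvx
    rw [if_pos rfl, if_neg (fun h => hxy h.symm), if_neg (fun h => hxz h.symm)]
    exact hone v (by rw [hsupp]; simp)
  by_cases hvy : v = y
  · subst hvy
    rw [if_neg (fun h => hvx h.symm), if_pos rfl, if_neg (fun h => hyz h.symm)]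
    exact hone v (by rw [hsupp]; simp)
  by_cases hvz : v = z
  · subst hvz
    rw [if_neg (fun h => hvx h.symm), if_neg (fun h => hvy h.symm), if_pos rfl]
    exact hone v (by rw [hsupp]; simp)
  · rw [if_neg (fun h => hvx h.symm), if_neg (fun h => hvy h.symm),
      if_neg (fun h => hvz h.symm)]
    have : v ∉ m.support := by rw [hsupp]; simp [hvx, hvy, hvz]
    exact Finsupp.notMem_support_iff.1 this

lemma support_two {x y : ℕ} (hxy : x ≠ y) :
    (Finsupp.single x 1 + Finsupp.single y 1 : ℕ →₀ ℕ).support = {x, y} := by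
  rw [Finsupp.support_add_eq]
  · rw [Finsupp.support_single_ne_zero x one_ne_zero,
      Finsupp.support_single_ne_zero y one_ne_zero]
    rfl
  · rw [Finsupp.support_single_ne_zero x one_ne_zero,
      Finsupp.support_single_ne_zero y one_ne_zero]
    simp only [Finset.disjoint_singleton]
    omega

lemma support_three {x y z : ℕ} (hxy : x ≠ y) (hxz : x ≠ z) (hyz : y ≠ z) :
    (Finsupp.single x 1 + Finsupp.single y 1 + Finsupp.single z 1 : ℕ →₀ ℕ).support
      = {x, y, z} := by
  rw [Finsupp.support_add_eq]
  · rw [support_two hxy, Finsupp.support_single_ne_zero z one_ne_zero]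
    ext w; simp [or_assoc]
  · rw [support_two hxy, Finsupp.support_single_ne_zero z one_ne_zero]
    simp [Finset.disjoint_left]
    omega

end Stmt8Aux

namespace Stmt8Aux
variable (t : ℕ) (s : Fin t → ℕ)

def Sf : ℕ → ℕ := fun n => if h : n < t then s ⟨n, h⟩ - 1 else 0

lemma Sf_eq {i : ℕ} (hi : i < t) : Sf t s i = s ⟨i, hi⟩ - 1 := dif_pos hi

def cl (t x : ℕ) : ℕ := x / 2 % t

lemma cl_cd {i : ℕ} (hi : i < t) (a : ℕ) : cl t (cd t i a) = i := by
  unfold cl cd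
  rw [Nat.mul_div_cancel_left _ (by norm_num : 0 < 2), Nat.mul_add_mod]
  exact Nat.mod_eq_of_lt hi

def B2 : Finset ((_ : Fin t × Fin t) × ℕ × ℕ) :=
  (univ.filter fun p : Fin t × Fin t => p.1 < p.2).sigma fun p =>
    range (s p.1 - 1) ×ˢ range (s p.2 - 1)

noncomputable def cls2 (z : (_ : Fin t × Fin t) × ℕ × ℕ) : ℕ →₀ ℕ :=
  Finsupp.single (cd t z.1.1 z.2.1) 1 + Finsupp.single (cd t z.1.2 z.2.2) 1

def B3 : Finset ((_ : Fin t × Fin t × Fin t) × ℕ × ℕ × ℕ) :=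
  (univ.filter fun p : Fin t × Fin t × Fin t => p.1 < p.2.1 ∧ p.2.1 < p.2.2).sigma fun p =>
    range (s p.1 - 1) ×ˢ (range (s p.2.1 - 1) ×ˢ range (s p.2.2 - 1))

noncomputable def cls3 (z : (_ : Fin t × Fin t × Fin t) × ℕ × ℕ × ℕ) : ℕ →₀ ℕ :=
  Finsupp.single (cd t z.1.1 z.2.1) 1 + Finsupp.single (cd t z.1.2.1 z.2.2.1) 1 +
    Finsupp.single (cd t z.1.2.2 z.2.2.2) 1

noncomputable def ClsF : ℕ → Finset (ℕ →₀ ℕ)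
  | 0 => {0}
  | 1 => (VC t (Sf t s)).image fun x => Finsupp.single x 1
  | 2 => (B2 t s).image (cls2 t)
  | 3 => (B3 t s).image (cls3 t)
  | _ => ∅

lemma mem_B2_iff {z : (_ : Fin t × Fin t) × ℕ × ℕ} :
    z ∈ B2 t s ↔ z.1.1 < z.1.2 ∧ z.2.1 < s z.1.1 - 1 ∧ z.2.2 < s z.1.2 - 1 := by
  simp [B2, Finset.mem_sigma, Finset.mem_product]

lemma mem_B3_iff {z : (_ : Fin t × Fin t × Fin t) × ℕ × ℕ × ℕ} :
    z ∈ B3 t s ↔ (z.1.1 < z.1.2.1 ∧ z.1.2.1 < z.1.2.2) ∧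
      z.2.1 < s z.1.1 - 1 ∧ z.2.2.1 < s z.1.2.1 - 1 ∧ z.2.2.2 < s z.1.2.2 - 1 := by
  simp [B3, Finset.mem_sigma, Finset.mem_product, and_assoc]

lemma inj_cls2 : Set.InjOn (cls2 t) (B2 t s) := by
  rintro ⟨⟨i, j⟩, a, b⟩ hz ⟨⟨i', j'⟩, a', b'⟩ hz' h
  rw [mem_coe, mem_B2_iff] at hz hz'
  obtain ⟨hij, _, _⟩ := hz
  obtain ⟨hij', _, _⟩ := hz'
  have hx : cd t i a ≠ cd t j b := fun hc => by
    have := congrArg (cl t) hc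
    rw [cl_cd t i.2 a, cl_cd t j.2 b] at this
    exact absurd (Fin.ext this : i = j) (ne_of_lt hij)
  have hx' : cd t i' a' ≠ cd t j' b' := fun hc => by
    have := congrArg (cl t) hc
    rw [cl_cd t i'.2 a', cl_cd t j'.2 b'] at this
    exact absurd (Fin.ext this : i' = j') (ne_of_lt hij')
  have hsupp := congrArg Finsupp.support h
  rw [cls2, cls2, support_two hx, support_two hx'] at hsupp
  have hpe := pair_eq (c := cl t)
    (by rw [cl_cd t i.2 a, cl_cd t j.2 b]; exact hij)
    (by rw [cl_cd t i'.2 a', cl_cd t j'.2 b']; exact hij') hsupp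
  obtain ⟨h1, h2⟩ := hpe
  obtain ⟨hii, haa⟩ := cd_inj i.2 i'.2 h1
  obtain ⟨hjj, hbb⟩ := cd_inj j.2 j'.2 h2
  have : i = i' := Fin.ext hii
  subst this
  have : j = j' := Fin.ext hjj
  subst this
  subst haa; subst hbb
  rfl

lemma inj_cls3 : Set.InjOn (cls3 t) (B3 t s) := by
  rintro ⟨⟨i, j, k⟩, a, b, c⟩ hz ⟨⟨i', j', k'⟩, a', b', c'⟩ hz' h
  rw [mem_coe, mem_B3_iff] at hz hz'
  obtain ⟨⟨hij, hjk⟩, _, _, _⟩ := hz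
  obtain ⟨⟨hij', hjk'⟩, _, _, _⟩ := hz'
  have c1 : cl t (cd t i a) = (i : ℕ) := cl_cd t i.2 a
  have c2 : cl t (cd t j b) = (j : ℕ) := cl_cd t j.2 b
  have c3 : cl t (cd t k c) = (k : ℕ) := cl_cd t k.2 c
  have c1' : cl t (cd t i' a') = (i' : ℕ) := cl_cd t i'.2 a'
  have c2' : cl t (cd t j' b') = (j' : ℕ) := cl_cd t j'.2 b'
  have c3' : cl t (cd t k' c') = (k' : ℕ) := cl_cd t k'.2 c'
  have hd1 : cd t i a ≠ cd t j b := fun hc => by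
    have := congrArg (cl t) hc; rw [c1, c2] at this
    exact absurd (Fin.ext this : i = j) (ne_of_lt hij)
  have hd2 : cd t i a ≠ cd t k c := fun hc => by
    have := congrArg (cl t) hc; rw [c1, c3] at this
    exact absurd (Fin.ext this : i = k) (ne_of_lt (lt_trans hij hjk))
  have hd3 : cd t j b ≠ cd t k c := fun hc => by
    have := congrArg (cl t) hc; rw [c2, c3] at this
    exact absurd (Fin.ext this : j = k) (ne_of_lt hjk)
  have hd1' : cd t i' a' ≠ cd t j' b' := fun hc => by
    have := congrArg (cl t) hc; rw [c1', c2'] at this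
    exact absurd (Fin.ext this : i' = j') (ne_of_lt hij')
  have hd2' : cd t i' a' ≠ cd t k' c' := fun hc => by
    have := congrArg (cl t) hc; rw [c1', c3'] at this
    exact absurd (Fin.ext this : i' = k') (ne_of_lt (lt_trans hij' hjk'))
  have hd3' : cd t j' b' ≠ cd t k' c' := fun hc => by
    have := congrArg (cl t) hc; rw [c2', c3'] at this
    exact absurd (Fin.ext this : j' = k') (ne_of_lt hjk')
  have hsupp := congrArg Finsupp.support h
  rw [cls3, cls3, support_three hd1 hd2 hd3, support_three hd1' hd2' hd3'] at hsupp
  have hpe := triple_eq (c := cl t)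
    (by rw [c1, c2]; exact hij) (by rw [c2, c3]; exact hjk)
    (by rw [c1', c2']; exact hij') (by rw [c2', c3']; exact hjk') hsupp
  obtain ⟨h1, h2, h3⟩ := hpe
  obtain ⟨hii, haa⟩ := cd_inj i.2 i'.2 h1
  obtain ⟨hjj, hbb⟩ := cd_inj j.2 j'.2 h2
  obtain ⟨hkk, hcc⟩ := cd_inj k.2 k'.2 h3
  have : i = i' := Fin.ext hii
  subst this
  have : j = j' := Fin.ext hjj
  subst this
  have : k = k' := Fin.ext hkk
  subst this
  subst haa; subst hbb; subst hcc
  rfl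

lemma card_ClsF_zero : (ClsF t s 0).card = 1 := rfl

lemma card_ClsF_one : (ClsF t s 1).card = ∑ i, (s i - 1) := by
  show ((VC t (Sf t s)).image fun x => Finsupp.single x 1).card = _
  rw [card_image_of_injOn ((Finsupp.single_left_injective one_ne_zero).injOn),
    card_VC, ← Fin.sum_univ_eq_sum_range (fun n => Sf t s n) t]
  exact Finset.sum_congr rfl fun i _ => by rw [Sf_eq t s i.2]

lemma card_ClsF_two :
    (ClsF t s 2).card =
      ∑ p ∈ Finset.univ.filter (fun p : Fin t × Fin t => p.1 < p.2), (s p.1 - 1) * (s p.2 - 1) := by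
  show ((B2 t s).image (cls2 t)).card = _
  rw [card_image_of_injOn (inj_cls2 t s), B2, Finset.card_sigma]
  exact Finset.sum_congr rfl fun p _ => by rw [Finset.card_product, card_range, card_range]

lemma card_ClsF_three :
    (ClsF t s 3).card =
      ∑ p ∈ Finset.univ.filter (fun p : Fin t × Fin t × Fin t => p.1 < p.2.1 ∧ p.2.1 < p.2.2),
        (s p.1 - 1) * ((s p.2.1 - 1) * (s p.2.2 - 1)) := by
  show ((B3 t s).image (cls3 t)).card = _
  rw [card_image_of_injOn (inj_cls3 t s), B3, Finset.card_sigma]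
  exact Finset.sum_congr rfl fun p _ => by
    rw [Finset.card_product, Finset.card_product, card_range, card_range, card_range]

end Stmt8Aux

namespace Stmt8Aux
variable (t : ℕ) (s : Fin t → ℕ)

lemma mdeg_zero : mdeg (0 : ℕ →₀ ℕ) = 0 := rfl

lemma ClsF_props {p : ℕ} (hp : p ≤ 3) {c : ℕ →₀ ℕ} :
    c ∈ ClsF t s p ↔ ((c.support : Set ℕ) ⊆ ↑(VC t (Sf t s)) ∧ (∀ x ∈ c.support, c x = 1) ∧
      (∀ x ∈ c.support, ∀ y ∈ c.support, cl t x = cl t y → x = y) ∧ mdeg c = p) := by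
  have hdec : ∀ x ∈ VC t (Sf t s), ∃ (i : ℕ) (hi : i < t) (a : ℕ),
      a < s ⟨i, hi⟩ - 1 ∧ x = cd t i a := by
    intro x hx
    obtain ⟨i, hi, a, ha, rfl⟩ := (mem_VC t (Sf t s)).1 hx
    exact ⟨i, hi, a, by rwa [Sf_eq t s hi] at ha, rfl⟩
  interval_cases p
  · constructor
    · intro hc
      have : c = 0 := by simpa [ClsF] using hc
      subst this
      exact ⟨by simp, by simp, by simp, rfl⟩
    · rintro ⟨-, -, -, h4⟩
      have : c = 0 := mdeg_eq_zero h4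
      simp [ClsF, this]
  · constructor
    · intro hc
      obtain ⟨x, hx, rfl⟩ := mem_image.1 hc
      have hsupp : (Finsupp.single x 1 : ℕ →₀ ℕ).support = {x} :=
        Finsupp.support_single_ne_zero x one_ne_zero
      refine ⟨?_, ?_, ?_, mdeg_single x 1⟩
      · rw [hsupp]; intro w hw; simp at hw; subst hw; exact hx
      · intro w hw; rw [hsupp] at hw; simp at hw; subst hw; simp
      · intro w1 hw1 w2 hw2 _
        rw [hsupp] at hw1 hw2; simp at hw1 hw2; rw [hw1, hw2]
    · rintro ⟨h1, h2, h3, h4⟩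
      have hcard : c.support.card = 1 := by rw [← mdeg_eq_card h2]; exact h4
      obtain ⟨x, hx⟩ := Finset.card_eq_one.1 hcard
      refine mem_image.2 ⟨x, ?_, (eq_single_of hx h2).symm⟩
      exact Finset.mem_coe.1 (h1 (by rw [hx]; simp))
  · constructor
    · intro hc
      obtain ⟨z, hz, rfl⟩ := mem_image.1 hc
      obtain ⟨⟨i, j⟩, a, b⟩ := z
      obtain ⟨hij, ha, hb⟩ := (mem_B2_iff t s).1 hz
      simp only at hij ha hb
      set x := cd t i a with hxd
      set y := cd t j b with hyd
      have hclx : cl t x = (i : ℕ) := cl_cd t i.2 a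
      have hcly : cl t y = (j : ℕ) := cl_cd t j.2 b
      have hxy : x ≠ y := fun hc => by
        have := congrArg (cl t) hc
        rw [hclx, hcly] at this
        exact absurd (Fin.ext this : i = j) (ne_of_lt hij)
      have hsupp : (cls2 t ⟨(i, j), a, b⟩).support = {x, y} := support_two hxy
      have hmemx : x ∈ VC t (Sf t s) :=
        (mem_VC t (Sf t s)).2 ⟨i, i.2, a, by rw [Sf_eq t s i.2]; simpa using ha, rfl⟩
      have hmemy : y ∈ VC t (Sf t s) :=
        (mem_VC t (Sf t s)).2 ⟨j, j.2, b, by rw [Sf_eq t s j.2]; simpa using hb, rfl⟩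
      refine ⟨?_, ?_, ?_, ?_⟩
      · rw [hsupp]; intro w hw; simp at hw
        rcases hw with rfl | rfl
        · exact hmemx
        · exact hmemy
      · intro v hv
        rw [hsupp] at hv; simp at hv
        show (Finsupp.single x 1 + Finsupp.single y 1 : ℕ →₀ ℕ) v = 1
        rw [Finsupp.add_apply, Finsupp.single_apply, Finsupp.single_apply]
        rcases hv with rfl | rfl
        · rw [if_pos rfl, if_neg (fun h : y = x => hxy h.symm)]
          omega
        · rw [if_neg (fun h : x = y => hxy h), if_pos rfl]
      · intro w1 hw1 w2 hw2 hcl12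
        rw [hsupp] at hw1 hw2; simp at hw1 hw2
        rcases hw1 with rfl | rfl <;> rcases hw2 with rfl | rfl
        · rfl
        · exfalso; rw [hclx, hcly] at hcl12
          exact absurd (Fin.ext hcl12 : i = j) (ne_of_lt hij)
        · exfalso; rw [hclx, hcly] at hcl12
          exact absurd (Fin.ext hcl12.symm : i = j) (ne_of_lt hij)
        · rfl
      · show mdeg (Finsupp.single x 1 + Finsupp.single y 1) = 2
        rw [mdeg_add, mdeg_single, mdeg_single]
    · rintro ⟨h1, h2, h3, h4⟩
      have hcard : c.support.card = 2 := by rw [← mdeg_eq_card h2]; exact h4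
      obtain ⟨x, y, hxy, hsupp⟩ := Finset.card_eq_two.1 hcard
      have hxs : x ∈ c.support := by rw [hsupp]; simp
      have hys : y ∈ c.support := by rw [hsupp]; simp
      obtain ⟨i, hi, a, ha, rfl⟩ := hdec x (Finset.mem_coe.1 (h1 hxs))
      obtain ⟨j, hj, b, hb, rfl⟩ := hdec y (Finset.mem_coe.1 (h1 hys))
      have hclij : i ≠ j := fun hc => by
        subst hc
        exact hxy (h3 _ hxs _ hys (by rw [cl_cd t hi, cl_cd t hj]))
      rcases Nat.lt_or_ge i j with hij | hij
      · refine mem_image.2 ⟨⟨(⟨i, hi⟩, ⟨j, hj⟩), a, b⟩, ?_, ?_⟩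
        · exact (mem_B2_iff t s).2 ⟨Fin.mk_lt_mk.2 hij, ha, hb⟩
        · exact (eq_two_of hsupp hxy h2).symm
      · have hji : j < i := by omega
        refine mem_image.2 ⟨⟨(⟨j, hj⟩, ⟨i, hi⟩), b, a⟩, ?_, ?_⟩
        · exact (mem_B2_iff t s).2 ⟨Fin.mk_lt_mk.2 hji, hb, ha⟩
        · rw [show cls2 t ⟨(⟨j, hj⟩, ⟨i, hi⟩), b, a⟩
            = Finsupp.single (cd t j b) 1 + Finsupp.single (cd t i a) 1 from rfl]
          rw [eq_two_of (hsupp.trans (Finset.pair_comm _ _)) (Ne.symm hxy) h2]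
  · constructor
    · intro hc
      obtain ⟨z, hz, rfl⟩ := mem_image.1 hc
      obtain ⟨⟨i, j, k⟩, a, b, e⟩ := z
      obtain ⟨⟨hij, hjk⟩, ha, hb, he⟩ := (mem_B3_iff t s).1 hz
      simp only at hij hjk ha hb he
      set x := cd t i a with hxd
      set y := cd t j b with hyd
      set w := cd t k e with hwd
      have hclx : cl t x = (i : ℕ) := cl_cd t i.2 a
      have hcly : cl t y = (j : ℕ) := cl_cd t j.2 b
      have hclw : cl t w = (k : ℕ) := cl_cd t k.2 e
      have hik : i < k := lt_trans hij hjk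
      have hxy : x ≠ y := fun hc => by
        have := congrArg (cl t) hc; rw [hclx, hcly] at this
        exact absurd (Fin.ext this : i = j) (ne_of_lt hij)
      have hxw : x ≠ w := fun hc => by
        have := congrArg (cl t) hc; rw [hclx, hclw] at this
        exact absurd (Fin.ext this : i = k) (ne_of_lt hik)
      have hyw : y ≠ w := fun hc => by
        have := congrArg (cl t) hc; rw [hcly, hclw] at this
        exact absurd (Fin.ext this : j = k) (ne_of_lt hjk)
      have hsupp : (cls3 t ⟨(i, j, k), a, b, e⟩).support = {x, y, w} :=
        support_three hxy hxw hyw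
      have hmemx : x ∈ VC t (Sf t s) :=
        (mem_VC t (Sf t s)).2 ⟨i, i.2, a, by rw [Sf_eq t s i.2]; simpa using ha, rfl⟩
      have hmemy : y ∈ VC t (Sf t s) :=
        (mem_VC t (Sf t s)).2 ⟨j, j.2, b, by rw [Sf_eq t s j.2]; simpa using hb, rfl⟩
      have hmemw : w ∈ VC t (Sf t s) :=
        (mem_VC t (Sf t s)).2 ⟨k, k.2, e, by rw [Sf_eq t s k.2]; simpa using he, rfl⟩
      have happ : ∀ v ∈ ({x, y, w} : Finset ℕ), (cls3 t ⟨(i, j, k), a, b, e⟩) v = 1 := by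
        intro v hv
        simp only [Finset.mem_insert, Finset.mem_singleton] at hv
        show (Finsupp.single x 1 + Finsupp.single y 1 + Finsupp.single w 1 : ℕ →₀ ℕ) v = 1
        rw [Finsupp.add_apply, Finsupp.add_apply, Finsupp.single_apply, Finsupp.single_apply,
          Finsupp.single_apply]
        rcases hv with rfl | rfl | rfl
        · rw [if_pos rfl, if_neg (fun h : y = x => hxy h.symm),
            if_neg (fun h : w = x => hxw h.symm)]
          omega
        · rw [if_neg (fun h : x = y => hxy h), if_pos rfl,
            if_neg (fun h : w = y => hyw h.symm)]
          omega
        · rw [if_neg (fun h : x = w => hxw h), if_neg (fun h : y = w => hyw h), if_pos rfl]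
          omega
      refine ⟨?_, ?_, ?_, ?_⟩
      · rw [hsupp]; intro v hv; simp at hv
        rcases hv with rfl | rfl | rfl
        · exact hmemx
        · exact hmemy
        · exact hmemw
      · intro v hv; rw [hsupp] at hv; exact happ v hv
      · intro v1 hv1 v2 hv2 hcl12
        rw [hsupp] at hv1 hv2; simp at hv1 hv2
        have hfin : ∀ v ∈ ({x, y, w} : Finset ℕ), ∀ v' ∈ ({x, y, w} : Finset ℕ),
            cl t v = cl t v' → v = v' := by
          intro v hv v' hv' hcc
          simp only [Finset.mem_insert, Finset.mem_singleton] at hv hv'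
          rcases hv with rfl | rfl | rfl <;> rcases hv' with rfl | rfl | rfl <;>
            first
              | rfl
              | (exfalso
                 simp only [hclx, hcly, hclw] at hcc
                 have hij' : (i : ℕ) < j := hij
                 have hjk' : (j : ℕ) < k := hjk
                 omega)
        exact hfin v1 (by simp only [Finset.mem_insert, Finset.mem_singleton]; tauto)
          v2 (by simp only [Finset.mem_insert, Finset.mem_singleton]; tauto) hcl12
      · show mdeg (Finsupp.single x 1 + Finsupp.single y 1 + Finsupp.single w 1) = 3
        rw [mdeg_add, mdeg_add, mdeg_single, mdeg_single, mdeg_single]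
    · rintro ⟨h1, h2, h3, h4⟩
      have hcard : c.support.card = 3 := by rw [← mdeg_eq_card h2]; exact h4
      obtain ⟨x, y, w, hxy, hxw, hyw, hsupp⟩ := Finset.card_eq_three.1 hcard
      have hxs : x ∈ c.support := by rw [hsupp]; simp
      have hys : y ∈ c.support := by rw [hsupp]; simp
      have hws : w ∈ c.support := by rw [hsupp]; simp
      have hclxy : cl t x ≠ cl t y := fun hc => hxy (h3 _ hxs _ hys hc)
      have hclxw : cl t x ≠ cl t w := fun hc => hxw (h3 _ hxs _ hws hc)
      have hclyw : cl t y ≠ cl t w := fun hc => hyw (h3 _ hys _ hws hc)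
      obtain ⟨x', y', w', hcl1, hcl2, hset⟩ := sort3 hclxy hclxw hclyw
      have hsupp' : c.support = {x', y', w'} := by rw [hsupp, ← hset]
      have hx's : x' ∈ c.support := by rw [hsupp']; simp
      have hy's : y' ∈ c.support := by rw [hsupp']; simp
      have hw's : w' ∈ c.support := by rw [hsupp']; simp
      obtain ⟨i, hi, a, ha, rfl⟩ := hdec x' (Finset.mem_coe.1 (h1 hx's))
      obtain ⟨j, hj, b, hb, rfl⟩ := hdec y' (Finset.mem_coe.1 (h1 hy's))
      obtain ⟨k, hk, e, he, rfl⟩ := hdec w' (Finset.mem_coe.1 (h1 hw's))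
      rw [cl_cd t hi, cl_cd t hj] at hcl1
      rw [cl_cd t hj, cl_cd t hk] at hcl2
      have hd1 : cd t i a ≠ cd t j b := fun hc => by
        have := congrArg (cl t) hc; rw [cl_cd t hi, cl_cd t hj] at this; omega
      have hd2 : cd t i a ≠ cd t k e := fun hc => by
        have := congrArg (cl t) hc; rw [cl_cd t hi, cl_cd t hk] at this; omega
      have hd3 : cd t j b ≠ cd t k e := fun hc => by
        have := congrArg (cl t) hc; rw [cl_cd t hj, cl_cd t hk] at this; omega
      refine mem_image.2 ⟨⟨(⟨i, hi⟩, ⟨j, hj⟩, ⟨k, hk⟩), a, b, e⟩, ?_, ?_⟩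
      · exact (mem_B3_iff t s).2 ⟨⟨Fin.mk_lt_mk.2 hcl1, Fin.mk_lt_mk.2 hcl2⟩, ha, hb, he⟩
      · exact (eq_three_of hsupp' hd1 hd2 hd3 h2).symm

end Stmt8Aux

namespace Stmt8Aux
variable (t u : ℕ) (s : Fin t → ℕ)

noncomputable def Pj (p q : ℕ) : Finset (ℕ →₀ ℕ) :=
  ((ClsF t s p) ×ˢ (FrF u q)).image fun z => z.1 + z.2

noncomputable def Fslice (j : ℕ) : Finset (ℕ →₀ ℕ) :=
  (Finset.HasAntidiagonal.antidiagonal j).biUnion fun pq => Pj t u s pq.1 pq.2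

lemma filter_parity_add {c f : ℕ →₀ ℕ} (hc : ∀ x ∈ c.support, x % 2 = 0)
    (hf : ∀ x ∈ f.support, x % 2 = 1) :
    (c + f).filter (fun x => x % 2 = 0) = c := by
  classical
  rw [Finsupp.filter_add]
  have h1 : c.filter (fun x => x % 2 = 0) = c := by
    ext x
    rw [Finsupp.filter_apply]
    by_cases hx : x % 2 = 0
    · rw [if_pos hx]
    · rw [if_neg hx]
      by_contra h
      exact hx (hc x (Finsupp.mem_support_iff.2 fun hh => h hh.symm))
  have h2 : f.filter (fun x => x % 2 = 0) = 0 := by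
    ext x
    rw [Finsupp.filter_apply]
    by_cases hx : x % 2 = 0
    · rw [if_pos hx]
      by_contra h
      have := hf x (Finsupp.mem_support_iff.2 fun hh => h (hh.trans rfl))
      omega
    · rw [if_neg hx]; rfl
  rw [h1, h2, add_zero]

lemma ClsF_even {p : ℕ} (hp : p ≤ 3) {c : ℕ →₀ ℕ} (hc : c ∈ ClsF t s p) :
    ∀ x ∈ c.support, x % 2 = 0 := by
  intro x hx
  exact VC_even t (Sf t s) (Finset.mem_coe.1 (((ClsF_props t s hp).1 hc).1 hx))

lemma FrF_odd {q : ℕ} {f : ℕ →₀ ℕ} (hf : f ∈ FrF u q) : ∀ x ∈ f.support, x % 2 = 1 :=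
  fun x hx => VF_odd u (((mem_FrF_iff u).1 hf).1 hx)

lemma mem_Pj_filter {p q : ℕ} (hp : p ≤ 3) {m : ℕ →₀ ℕ} (hm : m ∈ Pj t u s p q) :
    mdeg (m.filter (fun x => x % 2 = 0)) = p ∧ mdeg m = p + q := by
  obtain ⟨⟨c, f⟩, hz, rfl⟩ := mem_image.1 hm
  obtain ⟨hcm, hfm⟩ := Finset.mem_product.1 hz
  have hfe : (c + f).filter (fun x => x % 2 = 0) = c :=
    filter_parity_add (ClsF_even t s hp hcm) (FrF_odd u hfm)
  have hdc : mdeg c = p := (((ClsF_props t s hp).1 hcm)).2.2.2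
  have hdf : mdeg f = q := ((mem_FrF_iff u).1 hfm).2
  exact ⟨by rw [hfe, hdc], by rw [mdeg_add, hdc, hdf]⟩

lemma card_Pj {p q : ℕ} (hp : p ≤ 3) :
    (Pj t u s p q).card = (ClsF t s p).card * (FrF u q).card := by
  rw [Pj, card_image_of_injOn, Finset.card_product]
  rintro ⟨c, f⟩ hz ⟨c', f'⟩ hz' h
  rw [Finset.mem_coe, Finset.mem_product] at hz hz'
  simp only [] at h
  have h1 : (c + f).filter (fun x => x % 2 = 0) = c :=
    filter_parity_add (ClsF_even t s hp hz.1) (FrF_odd u hz.2)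
  have h2 : (c' + f').filter (fun x => x % 2 = 0) = c' :=
    filter_parity_add (ClsF_even t s hp hz'.1) (FrF_odd u hz'.2)
  have hcc : c = c' := by rw [← h1, ← h2, h]
  subst hcc
  have hff : f = f' := by
    have := h
    exact add_left_cancel this
  rw [hff]

lemma card_Fslice {j : ℕ} (hj : j ≤ 3) :
    (Fslice t u s j).card = ∑ k ∈ range (j + 1), (ClsF t s k).card * (FrF u (j - k)).card := by
  rw [Fslice, card_biUnion]
  · rw [← Finset.Nat.sum_antidiagonal_eq_sum_range_succ_mk
      (fun pq => (ClsF t s pq.1).card * (FrF u pq.2).card)]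
    refine Finset.sum_congr rfl fun pq hpq => ?_
    have hp3 : pq.1 ≤ 3 := by
      have := Finset.HasAntidiagonal.mem_antidiagonal.1 hpq; omega
    exact card_Pj t u s hp3
  · intro pq hpq pq' hpq' hne
    have hpj : pq.1 + pq.2 = j := Finset.HasAntidiagonal.mem_antidiagonal.1 hpq
    have hpj' : pq'.1 + pq'.2 = j := Finset.HasAntidiagonal.mem_antidiagonal.1 hpq'
    have hne1 : pq.1 ≠ pq'.1 := by
      intro h
      exact hne (Prod.ext h (by omega))
    rw [Function.onFun, Finset.disjoint_left]
    intro m hm hm'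
    have d1 := (mem_Pj_filter t u s (by omega : pq.1 ≤ 3) hm).1
    have d2 := (mem_Pj_filter t u s (by omega : pq'.1 ≤ 3) hm').1
    exact hne1 (by rw [← d1, ← d2])

lemma slice_eq {j : ℕ} (hj : j ≤ 3) :
    {m ∈ O t u (Sf t s) | mdeg m = j} = ↑(Fslice t u s j) := by
  classical
  ext m
  simp only [Set.mem_setOf_eq, Finset.mem_coe]
  constructor
  · rintro ⟨⟨h1, h2, h3, h4⟩, hdeg⟩
    set c := m.filter (fun x => x % 2 = 0) with hcd
    set f := m.filter (fun x => x % 2 = 1) with hfd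
    have hsplit : m = c + f := by
      ext x
      rw [Finsupp.add_apply, hcd, hfd, Finsupp.filter_apply, Finsupp.filter_apply]
      by_cases hx : x % 2 = 0
      · rw [if_pos hx, if_neg (by omega)]
        omega
      · rw [if_neg hx, if_pos (by omega)]
        omega
    have hcsup : c.support ⊆ m.support := by
      rw [hcd, Finsupp.support_filter]
      exact Finset.filter_subset _ _
    have hfsup : f.support ⊆ m.support := by
      rw [hfd, Finsupp.support_filter]
      exact Finset.filter_subset _ _
    have hceven : ∀ x ∈ c.support, x % 2 = 0 := by
      intro x hx
      rw [hcd, Finsupp.support_filter, Finset.mem_filter] at hx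
      exact hx.2
    have hfodd : ∀ x ∈ f.support, x % 2 = 1 := by
      intro x hx
      rw [hfd, Finsupp.support_filter, Finset.mem_filter] at hx
      exact hx.2
    have hcapp : ∀ x ∈ c.support, c x = m x := by
      intro x hx
      rw [hcd, Finsupp.filter_apply, if_pos (hceven x hx)]
    have hfapp : ∀ x ∈ f.support, f x = m x := by
      intro x hx
      rw [hfd, Finsupp.filter_apply, if_pos (hfodd x hx)]
    have hcVC : (c.support : Set ℕ) ⊆ ↑(VC t (Sf t s)) := by
      intro x hx
      have hx' : x ∈ c.support := hx
      have hm' := h1 (Finset.mem_coe.2 (hcsup hx'))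
      rw [Finset.mem_coe, Finset.mem_union] at hm'
      rcases hm' with h | h
      · exact Finset.mem_coe.2 h
      · exact absurd (VF_odd u h) (by have := hceven x hx'; omega)
    have hfVF : f.support ⊆ VF u := by
      intro x hx
      have hm' := h1 (Finset.mem_coe.2 (hfsup hx))
      rw [Finset.mem_coe, Finset.mem_union] at hm'
      rcases hm' with h | h
      · exact absurd (VC_even t (Sf t s) h) (by have := hfodd x hx; omega)
      · exact h
    have hdegsum : mdeg c + mdeg f = j := by rw [← mdeg_add, ← hsplit, hdeg]
    have hp3 : mdeg c ≤ 3 := by omega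
    have hcCls : c ∈ ClsF t s (mdeg c) := by
      refine (ClsF_props t s hp3).2 ⟨hcVC, ?_, ?_, rfl⟩
      · intro x hx
        have := h2 x (hceven x hx)
        have := Finsupp.mem_support_iff.1 hx
        rw [hcapp x hx]
        have := hcapp x hx
        omega
      · intro x hx y hy hcl
        have hxVC := Finset.mem_coe.1 (hcVC hx)
        have hyVC := Finset.mem_coe.1 (hcVC hy)
        obtain ⟨i, hi, a, _, rfl⟩ := (mem_VC t (Sf t s)).1 hxVC
        obtain ⟨i', hi', a', _, rfl⟩ := (mem_VC t (Sf t s)).1 hyVC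
        rw [cl_cd t hi, cl_cd t hi'] at hcl
        refine h3 _ (hcsup hx) _ (hcsup hy) (cd_even t i a) (cd_even t i' a') ?_
        rw [cd_mod hi, cd_mod hi', hcl]
    have hfFr : f ∈ FrF u (mdeg f) := (mem_FrF_iff u).2 ⟨hfVF, rfl⟩
    rw [Fslice, Finset.mem_biUnion]
    refine ⟨(mdeg c, mdeg f), Finset.HasAntidiagonal.mem_antidiagonal.2 hdegsum, ?_⟩
    exact mem_image.2 ⟨(c, f), Finset.mem_product.2 ⟨hcCls, hfFr⟩, hsplit.symm⟩
  · intro hm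
    rw [Fslice, Finset.mem_biUnion] at hm
    obtain ⟨pq, hpq, hmP⟩ := hm
    have hpqj : pq.1 + pq.2 = j := Finset.HasAntidiagonal.mem_antidiagonal.1 hpq
    have hp3 : pq.1 ≤ 3 := by omega
    obtain ⟨⟨c, f⟩, hz, rfl⟩ := mem_image.1 hmP
    obtain ⟨hcm, hfm⟩ := Finset.mem_product.1 hz
    obtain ⟨hc1, hc2, hc3, hc4⟩ := (ClsF_props t s hp3).1 hcm
    obtain ⟨hf1, hf2⟩ := (mem_FrF_iff u).1 hfm
    have hfe : ∀ x, x % 2 = 0 → f x = 0 := by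
      intro x hx
      by_contra h
      have := VF_odd u (hf1 (Finsupp.mem_support_iff.2 h))
      omega
    have hco : ∀ x, x % 2 = 1 → c x = 0 := by
      intro x hx
      by_contra h
      have := VC_even t (Sf t s) (Finset.mem_coe.1 (hc1 (Finsupp.mem_support_iff.2 h)))
      omega
    refine ⟨⟨?_, ?_, ?_, ?_⟩, ?_⟩
    · intro x hx
      have := Finsupp.support_add (Finset.mem_coe.1 hx)
      rw [Finset.mem_coe, Finset.mem_union]
      rcases Finset.mem_union.1 this with h | h
      · exact Or.inl (Finset.mem_coe.1 (hc1 h))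
      · exact Or.inr (hf1 h)
    · intro x hx
      rw [Finsupp.add_apply, hfe x hx, add_zero]
      by_cases hxs : x ∈ c.support
      · rw [hc2 x hxs]
      · rw [Finsupp.notMem_support_iff.1 hxs]; omega
    · intro x hxs y hys hx hy hmod
      have hxc : x ∈ c.support := by
        rw [Finsupp.mem_support_iff] at hxs ⊢
        rw [Finsupp.add_apply, hfe x hx, add_zero] at hxs
        exact hxs
      have hyc : y ∈ c.support := by
        rw [Finsupp.mem_support_iff] at hys ⊢
        rw [Finsupp.add_apply, hfe y hy, add_zero] at hys
        exact hys
      refine hc3 x hxc y hyc ?_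
      obtain ⟨i, hi, a, _, rfl⟩ := (mem_VC t (Sf t s)).1 (Finset.mem_coe.1 (hc1 hxc))
      obtain ⟨i', hi', a', _, rfl⟩ := (mem_VC t (Sf t s)).1 (Finset.mem_coe.1 (hc1 hyc))
      rw [cd_mod hi, cd_mod hi'] at hmod
      rw [cl_cd t hi, cl_cd t hi']
      omega
    · rw [mdeg_add, hc4, hf2]; omega
    · rw [mdeg_add, hc4, hf2]; omega

lemma slice_empty {j : ℕ} (hj : 4 ≤ j) :
    {m ∈ O t u (Sf t s) | mdeg m = j} = ∅ := by
  ext m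
  simp only [Set.mem_setOf_eq, Set.mem_empty_iff_false, iff_false]
  rintro ⟨⟨-, -, -, h4⟩, hdeg⟩
  omega

end Stmt8Aux

theorem stmt8 {t d : ℕ} (hdt : d ≤ t) (s : Fin t → ℕ) (hs : ∀ i, 1 ≤ s i) :
    IsPureOSeq (fun j =>
      if j = 0 then 1
      else       if j = 1 then ((∑ i, (s i - 1)) + (t - d) : ℕ)
      else if j = 2 then ((∑ p ∈ Finset.univ.filter (fun p : Fin t × Fin t => p.1 < p.2), (s p.1 - 1) * (s p.2 - 1)) +
        (t - d) * (∑ i, (s i - 1)) + Nat.choose (t - d + 1) 2 : ℕ)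
      else if j = 3 then ((∑ p ∈ Finset.univ.filter (fun p : Fin t × Fin t × Fin t => p.1 < p.2.1 ∧ p.2.1 < p.2.2),
          (s p.1 - 1) * ((s p.2.1 - 1) * (s p.2.2 - 1))) +
        (t - d) * (∑ p ∈ Finset.univ.filter (fun p : Fin t × Fin t => p.1 < p.2), (s p.1 - 1) * (s p.2 - 1)) +
        Nat.choose (t - d + 1) 2 * (∑ i, (s i - 1)) + Nat.choose (t - d + 2) 3 : ℕ)
      else 0) := by
  classical
  refine ⟨Stmt8Aux.O t (t - d) (Stmt8Aux.Sf t s), Stmt8Aux.finite_O _ _ _,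
    ⟨0, Stmt8Aux.zero_mem_O _ _ _⟩, Stmt8Aux.isOrderIdeal_O _ _ _, ?_, ?_⟩
  · by_cases hu : 0 < t - d
    · exact ⟨3, fun m hm hmax => Stmt8Aux.maximal_mdeg_of_pos _ _ _ hu hm hmax⟩
    · exact ⟨_, fun m hm hmax => Stmt8Aux.maximal_mdeg_of_zero _ _ _ (by omega) hm hmax⟩
  · intro i
    have e1 : t - d + 1 - 1 = t - d := by omega
    have e2 : t - d + 2 - 1 = t - d + 1 := by omega
    have e3 : t - d + 3 - 1 = t - d + 2 := by omega
    match i with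
    | 0 =>
      rw [Stmt8Aux.slice_eq t (t - d) s (by norm_num), Set.ncard_coe_finset,
        Stmt8Aux.card_Fslice t (t - d) s (by norm_num)]
      norm_num [Stmt8Aux.card_ClsF_zero, Stmt8Aux.card_FrF]
    | 1 =>
      rw [Stmt8Aux.slice_eq t (t - d) s (by norm_num), Set.ncard_coe_finset,
        Stmt8Aux.card_Fslice t (t - d) s (by norm_num)]
      rw [Finset.sum_range_succ, Finset.sum_range_succ, Finset.sum_range_zero]
      norm_num [Stmt8Aux.card_ClsF_zero, Stmt8Aux.card_ClsF_one, Stmt8Aux.card_FrF, e1]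
      push_cast
      ring
    | 2 =>
      rw [Stmt8Aux.slice_eq t (t - d) s (by norm_num), Set.ncard_coe_finset,
        Stmt8Aux.card_Fslice t (t - d) s (by norm_num)]
      rw [Finset.sum_range_succ, Finset.sum_range_succ, Finset.sum_range_succ,
        Finset.sum_range_zero]
      norm_num [Stmt8Aux.card_ClsF_zero, Stmt8Aux.card_ClsF_one, Stmt8Aux.card_ClsF_two,
        Stmt8Aux.card_FrF, e1, e2]
      push_cast
      ring
    | 3 =>
      rw [Stmt8Aux.slice_eq t (t - d) s (by norm_num), Set.ncard_coe_finset,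
        Stmt8Aux.card_Fslice t (t - d) s (by norm_num)]
      rw [Finset.sum_range_succ, Finset.sum_range_succ, Finset.sum_range_succ,
        Finset.sum_range_succ, Finset.sum_range_zero]
      simp only [Nat.reduceSub, Nat.reduceEqDiff, reduceIte, zero_add]
      rw [Stmt8Aux.card_ClsF_zero, Stmt8Aux.card_ClsF_one, Stmt8Aux.card_ClsF_two,
        Stmt8Aux.card_ClsF_three, Stmt8Aux.card_FrF, Stmt8Aux.card_FrF, Stmt8Aux.card_FrF,
        Stmt8Aux.card_FrF, e1, e2, e3, Nat.choose_zero_right, Nat.choose_one_right]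
      push_cast
      ring
    | (n + 4) =>
      rw [Stmt8Aux.slice_empty t (t - d) s (by omega), Set.ncard_empty]
      have h0 : n + 4 ≠ 0 := by omega
      have h1 : n + 4 ≠ 1 := by omega
      have h2 : n + 4 ≠ 2 := by omega
      have h3 : n + 4 ≠ 3 := by omega
      simp only [h0, h1, h2, h3, if_false, ite_false]
      norm_num
end

section
/- Let M be a loopless matroid of rank d ≥ 3 with parallelism class sizes s_1,...,s_t. Then f_2(M) ≤ Σ_{1≤i<j<k≤t} s_i s_j s_k, and consequently h_3(M) ≤ Σ_{i<j<k}(s_i-1)(s_j-1)(s_k-1) + (t-d)Σ_{i<j}(s_i-1)(s_j-1) + C(t-d+1,2)Σ(s_i-1) + C(t-d+2,3). -/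
open Finset Polynomial

/-- `fNum M i` is the number of independent sets of `M` of cardinality `i`,
i.e. `f_{i-1}(M)`. -/
noncomputable def fNum {α : Type*} (M : Matroid α) (i : ℕ) : ℕ :=
  {A : Set α | M.Indep A ∧ A.ncard = i}.ncard

lemma coeff_one_sub_pow (n k : ℕ) (hkn : k ≤ n) :
    ((1 - X : ℝ[X]) ^ n).coeff k = (-1) ^ k * n.choose k := by
  have h1 : (1 - X : ℝ[X]) = -(X + C (-1)) := by
    simp only [map_neg, map_one]; ring
  rw [h1, neg_pow, ← C_1, ← C_neg, ← C_pow, coeff_C_mul, coeff_X_add_C_pow]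
  have h2 : n = (n - k) + k := (Nat.sub_add_cancel hkn).symm
  rw [h2, pow_add, Nat.add_sub_cancel]
  have h3 : ((-1 : ℝ) ^ (n - k)) * ((-1 : ℝ) ^ (n - k)) = 1 := by
    rw [← pow_add, ← two_mul, pow_mul]; norm_num
  rw [← h2]
  linear_combination ((-1 : ℝ) ^ k * (n.choose k : ℝ)) * h3

section Comb
variable {ι : Type*} [LinearOrder ι]

lemma sorted3 {x y z : ι} (hxy : x ≠ y) (hxz : x ≠ z) (hyz : y ≠ z) :
    ∃ i j k, i < j ∧ j < k ∧ ({x, y, z} : Set ι) = {i, j, k} := by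
  rcases hxy.lt_or_gt with h1 | h1 <;> rcases hxz.lt_or_gt with h2 | h2 <;>
    rcases hyz.lt_or_gt with h3 | h3
  · exact ⟨x, y, z, h1, h3, rfl⟩
  · exact ⟨x, z, y, h2, h3, by ext a; simp; tauto⟩
  · exact absurd (h2.trans h1) (not_lt.2 h3.le)
  · exact ⟨z, x, y, h2, h1, by ext a; simp; tauto⟩
  · exact ⟨y, x, z, h1, h2, by ext a; simp; tauto⟩
  · exact absurd (h3.trans h1) (not_lt.2 h2.le)
  · exact ⟨y, z, x, h3, h2, by ext a; simp; tauto⟩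
  · exact ⟨z, y, x, h3, h1, by ext a; simp; tauto⟩

lemma triple_eq [DecidableEq ι] {i j k i' j' k' : ι} (h1 : i < j) (h2 : j < k)
    (h3 : i' < j') (h4 : j' < k')
    (he : ({i, j, k} : Finset ι) = {i', j', k'}) : i = i' ∧ j = j' ∧ k = k' := by
  have bound : ∀ {a b c : ι}, a < b → b < c → ∀ x ∈ ({a, b, c} : Finset ι), a ≤ x ∧ x ≤ c := by
    intro a b c hab hbc x hx
    simp only [Finset.mem_insert, Finset.mem_singleton] at hx
    rcases hx with rfl | rfl | rfl
    · exact ⟨le_refl _, (hab.trans hbc).le⟩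
    · exact ⟨hab.le, hbc.le⟩
    · exact ⟨(hab.trans hbc).le, le_refl _⟩
  have mi : i ∈ ({i', j', k'} : Finset ι) := he ▸ (by simp)
  have mk : k ∈ ({i', j', k'} : Finset ι) := he ▸ (by simp)
  have mi' : i' ∈ ({i, j, k} : Finset ι) := he ▸ (by simp)
  have mk' : k' ∈ ({i, j, k} : Finset ι) := he ▸ (by simp)
  have hi : i = i' := le_antisymm ((bound h1 h2 i' mi').1) ((bound h3 h4 i mi).1)
  have hk : k = k' := le_antisymm ((bound h3 h4 k mk).2) ((bound h1 h2 k' mk').2)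
  subst hi; subst hk
  refine ⟨rfl, ?_, rfl⟩
  have mj : j ∈ ({i, j', k} : Finset ι) := he ▸ (by simp)
  simp only [Finset.mem_insert, Finset.mem_singleton] at mj
  rcases mj with rfl | rfl | rfl
  · exact absurd h1 (lt_irrefl _)
  · rfl
  · exact absurd h2 (lt_irrefl _)

lemma sorted3F [DecidableEq ι] {x y z : ι} (hxy : x ≠ y) (hxz : x ≠ z) (hyz : y ≠ z) :
    ∃ i j k, i < j ∧ j < k ∧ ({x, y, z} : Finset ι) = {i, j, k} := by
  rcases hxy.lt_or_gt with h1 | h1 <;> rcases hxz.lt_or_gt with h2 | h2 <;>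
    rcases hyz.lt_or_gt with h3 | h3
  · exact ⟨x, y, z, h1, h3, rfl⟩
  · exact ⟨x, z, y, h2, h3, by ext a; simp; tauto⟩
  · exact absurd (h2.trans h1) (not_lt.2 h3.le)
  · exact ⟨z, x, y, h2, h1, by ext a; simp; tauto⟩
  · exact ⟨y, x, z, h1, h2, by ext a; simp; tauto⟩
  · exact absurd (h3.trans h1) (not_lt.2 h2.le)
  · exact ⟨y, z, x, h3, h2, by ext a; simp; tauto⟩
  · exact ⟨z, y, x, h3, h1, by ext a; simp; tauto⟩

end Comb

section TriSum

variable {n : ℕ} {R : Type*} [CommSemiring R]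

lemma tri_sum (g : Fin n → R) :
    ∑ p ∈ Finset.univ.filter
        (fun p : Fin n × Fin n × Fin n => p.1 < p.2.1 ∧ p.2.1 < p.2.2),
        g p.1 * (g p.2.1 * g p.2.2)
      = ∑ A ∈ powersetCard 3 (univ : Finset (Fin n)), ∏ i ∈ A, g i := by
  refine Finset.sum_bij (fun p _ => ({p.1, p.2.1, p.2.2} : Finset (Fin n))) ?_ ?_ ?_ ?_
  · rintro ⟨i, j, k⟩ hp
    simp only [Finset.mem_filter] at hp
    obtain ⟨-, h1, h2⟩ := hp
    rw [Finset.mem_powersetCard]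
    refine ⟨Finset.subset_univ _, ?_⟩
    rw [Finset.card_insert_of_notMem (by simp [h1.ne, (h1.trans h2).ne]),
      Finset.card_pair h2.ne]
  · rintro ⟨i, j, k⟩ hp ⟨i', j', k'⟩ hp' hee
    replace hee : ({i, j, k} : Finset (Fin n)) = {i', j', k'} := hee
    simp only [Finset.mem_filter] at hp hp'
    obtain ⟨he1, he2, he3⟩ := triple_eq hp.2.1 hp.2.2 hp'.2.1 hp'.2.2 hee
    simp [he1, he2, he3, Prod.ext_iff]
  · intro A hA
    rw [Finset.mem_powersetCard] at hA
    obtain ⟨x, y, z, hxy, hxz, hyz, rfl⟩ := Finset.card_eq_three.1 hA.2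
    obtain ⟨i, j, k, h1, h2, he⟩ := sorted3F hxy hxz hyz
    exact ⟨⟨i, j, k⟩, by simp [h1, h2], he.symm⟩
  · rintro ⟨i, j, k⟩ hp
    simp only [Finset.mem_filter] at hp
    obtain ⟨-, h1, h2⟩ := hp
    rw [Finset.prod_insert (by simp [h1.ne, (h1.trans h2).ne]),
      Finset.prod_pair h2.ne]

lemma pair_sum (g : Fin n → R) :
    ∑ p ∈ Finset.univ.filter (fun p : Fin n × Fin n => p.1 < p.2), g p.1 * g p.2
      = ∑ A ∈ powersetCard 2 (univ : Finset (Fin n)), ∏ i ∈ A, g i := by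
  refine Finset.sum_bij (fun p _ => ({p.1, p.2} : Finset (Fin n))) ?_ ?_ ?_ ?_
  · rintro ⟨i, j⟩ hp
    simp only [Finset.mem_filter] at hp
    rw [Finset.mem_powersetCard]
    exact ⟨Finset.subset_univ _, Finset.card_pair hp.2.ne⟩
  · rintro ⟨i, j⟩ hp ⟨i', j'⟩ hp' hee
    replace hee : ({i, j} : Finset (Fin n)) = {i', j'} := hee
    simp only [Finset.mem_filter] at hp hp'
    have mi : i ∈ ({i', j'} : Finset (Fin n)) := hee ▸ (by simp)
    have mj : j ∈ ({i', j'} : Finset (Fin n)) := hee ▸ (by simp)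
    have mi' : i' ∈ ({i, j} : Finset (Fin n)) := hee ▸ (by simp)
    have mj' : j' ∈ ({i, j} : Finset (Fin n)) := hee ▸ (by simp)
    simp only [Finset.mem_insert, Finset.mem_singleton] at mi mj mi' mj'
    have hii : i = i' := by
      rcases mi with rfl | rfl
      · rfl
      · rcases mi' with rfl | rfl
        · rfl
        · exact absurd (hp.2.trans hp'.2) (lt_irrefl _)
    subst hii
    have : j = j' := by
      rcases mj with rfl | rfl
      · exact absurd hp.2 (lt_irrefl _)
      · rfl
    simp [this]
  · intro A hA
    rw [Finset.mem_powersetCard] at hA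
    obtain ⟨x, y, hxy, rfl⟩ := Finset.card_eq_two.1 hA.2
    rcases hxy.lt_or_gt with h | h
    · exact ⟨⟨x, y⟩, by simp [h], rfl⟩
    · exact ⟨⟨y, x⟩, by simp [h], by ext a; simp; tauto⟩
  · rintro ⟨i, j⟩ hp
    simp only [Finset.mem_filter] at hp
    rw [Finset.prod_pair hp.2.ne]

end TriSum

section Expand

variable {n : ℕ}

lemma count_supersets {k : ℕ} (B : Finset (Fin n)) (hB : B.card ≤ k) :
    ((powersetCard k (univ : Finset (Fin n))).filter (fun A => B ⊆ A)).card
      = (n - B.card).choose (k - B.card) := by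
  have hcard : ((univ : Finset (Fin n)) \ B).card = n - B.card := by
    rw [Finset.card_sdiff_of_subset (Finset.subset_univ _), Finset.card_univ, Fintype.card_fin]
  rw [← hcard, ← Finset.card_powersetCard]
  refine Finset.card_nbij' (fun A => A \ B) (fun C => C ∪ B) ?_ ?_ ?_ ?_
  · intro A hA
    simp only [Finset.mem_coe, Finset.mem_filter, Finset.mem_powersetCard] at hA
    rw [Finset.mem_coe, Finset.mem_powersetCard]
    exact ⟨Finset.sdiff_subset_sdiff (Finset.subset_univ _) le_rfl,
      by rw [Finset.card_sdiff_of_subset hA.2, hA.1.2]⟩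
  · intro C hC
    rw [Finset.mem_coe, Finset.mem_powersetCard] at hC
    have hdisj : Disjoint C B := Finset.disjoint_left.2 fun a ha =>
      (Finset.mem_sdiff.1 (hC.1 ha)).2
    simp only [Finset.mem_coe, Finset.mem_filter, Finset.mem_powersetCard]
    refine ⟨⟨Finset.subset_univ _, ?_⟩, Finset.subset_union_right⟩
    rw [Finset.card_union_of_disjoint hdisj, hC.2]
    omega
  · intro A hA
    simp only [Finset.mem_coe, Finset.mem_filter] at hA
    exact Finset.sdiff_union_of_subset hA.2
  · intro C hC
    rw [Finset.mem_coe, Finset.mem_powersetCard] at hC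
    have hdisj : Disjoint C B := Finset.disjoint_left.2 fun a ha =>
      (Finset.mem_sdiff.1 (hC.1 ha)).2
    show (C ∪ B) \ B = C
    rw [Finset.union_sdiff_cancel_right hdisj]

lemma count_supersets_zero {k : ℕ} (B : Finset (Fin n)) (hB : k < B.card) :
    ((powersetCard k (univ : Finset (Fin n))).filter (fun A => B ⊆ A)).card = 0 := by
  rw [Finset.card_eq_zero, Finset.filter_eq_empty_iff]
  intro A hA hBA
  rw [Finset.mem_powersetCard] at hA
  exact absurd (Finset.card_le_card hBA) (by omega)

lemma expand_sum (k : ℕ) (g : Fin n → ℝ) :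
    ∑ A ∈ powersetCard k (univ : Finset (Fin n)), ∏ i ∈ A, (g i + 1)
      = ∑ m ∈ Finset.range (n + 1),
          (if m ≤ k then (((n - m).choose (k - m) : ℕ) : ℝ) else 0) *
            ∑ B ∈ powersetCard m (univ : Finset (Fin n)), ∏ i ∈ B, g i := by
  have h1 : ∀ A : Finset (Fin n), ∏ i ∈ A, (g i + 1)
      = ∑ B ∈ A.powerset, ∏ i ∈ B, g i := by
    intro A
    rw [Finset.prod_add]
    simp
  calc ∑ A ∈ powersetCard k (univ : Finset (Fin n)), ∏ i ∈ A, (g i + 1)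
      = ∑ A ∈ powersetCard k (univ : Finset (Fin n)),
          ∑ B ∈ (univ : Finset (Fin n)).powerset,
            if B ⊆ A then ∏ i ∈ B, g i else 0 := by
        refine Finset.sum_congr rfl fun A hA => ?_
        rw [h1 A, ← Finset.sum_filter]
        congr 1
        ext B
        simp only [Finset.mem_powerset, Finset.mem_filter]
        rw [Finset.mem_powersetCard] at hA
        constructor
        · intro hBA; exact ⟨hBA.trans hA.1, hBA⟩
        · tauto
    _ = ∑ B ∈ (univ : Finset (Fin n)).powerset,
          ∑ A ∈ powersetCard k (univ : Finset (Fin n)),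
            if B ⊆ A then ∏ i ∈ B, g i else 0 := Finset.sum_comm
    _ = ∑ B ∈ (univ : Finset (Fin n)).powerset,
          (if B.card ≤ k then (((n - B.card).choose (k - B.card) : ℕ) : ℝ) else 0) *
            ∏ i ∈ B, g i := by
        refine Finset.sum_congr rfl fun B _ => ?_
        rw [← Finset.sum_filter, Finset.sum_const, nsmul_eq_mul]
        by_cases hBk : B.card ≤ k
        · rw [count_supersets B hBk, if_pos hBk]
        · rw [count_supersets_zero B (by omega), if_neg hBk]
          simp
    _ = _ := by
        rw [Finset.sum_powerset]
        rw [Finset.card_univ, Fintype.card_fin]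
        refine Finset.sum_congr rfl fun m _ => ?_
        rw [Finset.mul_sum]
        refine Finset.sum_congr rfl fun B hB => ?_
        rw [Finset.mem_powersetCard] at hB
        rw [hB.2]

lemma pc_zero_sum (g : Fin n → ℝ) :
    ∑ A ∈ powersetCard 0 (univ : Finset (Fin n)), ∏ i ∈ A, g i = 1 := by
  rw [Finset.powersetCard_zero]
  simp

lemma pc_one_sum (g : Fin n → ℝ) :
    ∑ A ∈ powersetCard 1 (univ : Finset (Fin n)), ∏ i ∈ A, g i = ∑ i, g i := by
  rw [Finset.powersetCard_one]
  rw [Finset.sum_map]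
  simp

end Expand

lemma two_mul_choose_two_s11 (n : ℕ) : 2 * (n + 1).choose 2 = (n + 1) * n := by
  induction n with
  | zero => rfl
  | succ m ih =>
    rw [show m + 1 + 1 = (m + 1) + 1 from rfl, Nat.choose_succ_succ (m + 1) 1,
      Nat.mul_add, ih, Nat.choose_one_right]
    ring

lemma six_mul_choose_three (n : ℕ) : 6 * (n + 2).choose 3 = (n + 2) * (n + 1) * n := by
  induction n with
  | zero => rfl
  | succ m ih =>
    rw [show m + 1 + 2 = (m + 2) + 1 from rfl, Nat.choose_succ_succ (m + 2) 2]
    have h2 : 6 * (m + 2).choose 2 = 3 * ((m + 2) * (m + 1)) := by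
      have h0 := two_mul_choose_two_s11 (m + 1)
      rw [show m + 1 + 1 = m + 2 from rfl] at h0
      omega
    rw [Nat.mul_add, ih, h2]
    ring

lemma cast_choose_two (n : ℕ) : (((n + 1).choose 2 : ℕ) : ℝ) = (n + 1) * n / 2 := by
  have := two_mul_choose_two_s11 n
  have h : ((2 * (n + 1).choose 2 : ℕ) : ℝ) = (((n + 1) * n : ℕ) : ℝ) := by rw [this]
  push_cast at h
  linarith

lemma cast_choose_three (n : ℕ) :
    (((n + 2).choose 3 : ℕ) : ℝ) = (n + 2) * (n + 1) * n / 6 := by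
  have := six_mul_choose_three n
  have h : ((6 * (n + 2).choose 3 : ℕ) : ℝ) = (((n + 2) * (n + 1) * n : ℕ) : ℝ) := by rw [this]
  push_cast at h
  linarith

lemma sorted3_key {β ι : Type*} [LinearOrder ι] (f : β → ι) {x y z : β}
    (hxy : f x ≠ f y) (hxz : f x ≠ f z) (hyz : f y ≠ f z) :
    ∃ a b c, f a < f b ∧ f b < f c ∧ ({x, y, z} : Set β) = {a, b, c} := by
  rcases hxy.lt_or_gt with h1 | h1 <;> rcases hxz.lt_or_gt with h2 | h2 <;>
    rcases hyz.lt_or_gt with h3 | h3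
  · exact ⟨x, y, z, h1, h3, rfl⟩
  · exact ⟨x, z, y, h2, h3, by ext a; simp; tauto⟩
  · exact absurd (h2.trans h1) (not_lt.2 h3.le)
  · exact ⟨z, x, y, h2, h1, by ext a; simp; tauto⟩
  · exact ⟨y, x, z, h1, h2, by ext a; simp; tauto⟩
  · exact absurd (h3.trans h1) (not_lt.2 h2.le)
  · exact ⟨y, z, x, h3, h2, by ext a; simp; tauto⟩
  · exact ⟨z, y, x, h3, h1, by ext a; simp; tauto⟩

section Counting

variable {α : Type*} [Fintype α] {t : ℕ} (M : Matroid α) (E : Fin t → Finset α)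
  (idx : α → Fin t)

lemma fthree_le
    (hidx_mem : ∀ a ∈ M.E, a ∈ E (idx a))
    (hidx_ne : ∀ A : Set α, M.Indep A → ∀ a ∈ A, ∀ b ∈ A, a ≠ b → idx a ≠ idx b) :
    fNum M 3 ≤ ∑ p ∈ Finset.univ.filter
        (fun p : Fin t × Fin t × Fin t => p.1 < p.2.1 ∧ p.2.1 < p.2.2),
        (E p.1).card * ((E p.2.1).card * (E p.2.2).card) := by
  classical
  set P3 := Finset.univ.filter
      (fun p : Fin t × Fin t × Fin t => p.1 < p.2.1 ∧ p.2.1 < p.2.2) with hP3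
  set T := P3.sigma (fun p => E p.1 ×ˢ (E p.2.1 ×ˢ E p.2.2)) with hT
  have hTcard : T.card = ∑ p ∈ P3, (E p.1).card * ((E p.2.1).card * (E p.2.2).card) := by
    rw [hT, Finset.card_sigma]
    exact Finset.sum_congr rfl fun p _ => by
      rw [Finset.card_product, Finset.card_product]
  rw [← hTcard]
  by_cases hS : {A : Set α | M.Indep A ∧ A.ncard = 3}.Nonempty
  · obtain ⟨A0, hA0⟩ := hS
    obtain ⟨x0, -, -, -, -, -, -⟩ := Set.ncard_eq_three.1 hA0.2
    have hQ : ∀ A : Set α, ∃ q : (Fin t × Fin t × Fin t) × α × α × α,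
        (M.Indep A ∧ A.ncard = 3) →
          (A = {q.2.1, q.2.2.1, q.2.2.2} ∧
            q.1 = (idx q.2.1, idx q.2.2.1, idx q.2.2.2) ∧
            idx q.2.1 < idx q.2.2.1 ∧ idx q.2.2.1 < idx q.2.2.2) := by
      intro A
      by_cases hA : M.Indep A ∧ A.ncard = 3
      · obtain ⟨x, y, z, hxy, hxz, hyz, rfl⟩ := Set.ncard_eq_three.1 hA.2
        have d1 : idx x ≠ idx y := hidx_ne _ hA.1 x (by simp) y (by simp) hxy
        have d2 : idx x ≠ idx z := hidx_ne _ hA.1 x (by simp) z (by simp) hxz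
        have d3 : idx y ≠ idx z := hidx_ne _ hA.1 y (by simp) z (by simp) hyz
        obtain ⟨a, b, c, hab, hbc, heq⟩ := sorted3_key idx d1 d2 d3
        exact ⟨((idx a, idx b, idx c), (a, b, c)), fun _ => ⟨heq, rfl, hab, hbc⟩⟩
      · exact ⟨((idx x0, idx x0, idx x0), (x0, x0, x0)), fun hcon => absurd hcon hA⟩
    choose fq hfq using hQ
    have hle : {A : Set α | M.Indep A ∧ A.ncard = 3}.ncard ≤ (T : Set ((_ : Fin t × Fin t × Fin t) × α × α × α)).ncard := by
      refine Set.ncard_le_ncard_of_injOn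
        (fun A => (⟨(fq A).1, (fq A).2⟩ : Σ _ : Fin t × Fin t × Fin t, α × α × α))
        ?_ ?_ (Set.toFinite _)
      · intro A hA
        set q := fq A with hqdef
        obtain ⟨heq, hfst, hab, hbc⟩ := hfq A hA
        have ha : q.2.1 ∈ A := by rw [heq]; exact Set.mem_insert _ _
        have hb : q.2.2.1 ∈ A := by rw [heq]; simp [hqdef]
        have hc : q.2.2.2 ∈ A := by rw [heq]; simp [hqdef]
        simp only [Finset.mem_coe, Finset.mem_sigma, Finset.mem_filter, Finset.mem_product,
          hP3, hT, hqdef, hfst]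
        exact ⟨⟨Finset.mem_univ _, hab, hbc⟩,
          hidx_mem _ (hA.1.subset_ground ha),
          hidx_mem _ (hA.1.subset_ground hb),
          hidx_mem _ (hA.1.subset_ground hc)⟩
      · intro A hA A' hA' hfe
        obtain ⟨heq, -, -, -⟩ := hfq A hA
        obtain ⟨heq', -, -, -⟩ := hfq A' hA'
        have h2 : (fq A).2 = (fq A').2 := congrArg Sigma.snd hfe
        rw [heq, heq', h2]
    calc fNum M 3 = {A : Set α | M.Indep A ∧ A.ncard = 3}.ncard := rfl
      _ ≤ (T : Set ((_ : Fin t × Fin t × Fin t) × α × α × α)).ncard := hle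
      _ = T.card := Set.ncard_coe_finset _
  · have : {A : Set α | M.Indep A ∧ A.ncard = 3} = ∅ :=
      Set.not_nonempty_iff_eq_empty.1 hS
    rw [fNum, this]
    simp

lemma ftwo_ge
    (huniq : ∀ (a : α) (i j : Fin t), a ∈ E i → a ∈ E j → i = j)
    (hpar' : ∀ (i j : Fin t) (a b : α), a ∈ E i → b ∈ E j → i ≠ j →
      a ≠ b ∧ M.Indep {a, b}) :
    ∑ p ∈ Finset.univ.filter (fun p : Fin t × Fin t => p.1 < p.2),
        (E p.1).card * (E p.2).card ≤ fNum M 2 := by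
  classical
  set P2 := Finset.univ.filter (fun p : Fin t × Fin t => p.1 < p.2) with hP2
  set T2 := P2.sigma (fun p => E p.1 ×ˢ E p.2) with hT2
  have hTcard : T2.card = ∑ p ∈ P2, (E p.1).card * (E p.2).card := by
    rw [hT2, Finset.card_sigma]
    exact Finset.sum_congr rfl fun p _ => Finset.card_product _ _
  rw [← hTcard]
  have hle : (T2 : Set ((_ : Fin t × Fin t) × α × α)).ncard
      ≤ {A : Set α | M.Indep A ∧ A.ncard = 2}.ncard := by
    refine Set.ncard_le_ncard_of_injOn
      (fun q => ({q.2.1, q.2.2} : Set α)) ?_ ?_ (Set.toFinite _)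
    · rintro ⟨⟨i, j⟩, a, b⟩ hq
      simp only [Finset.mem_coe, Finset.mem_sigma, Finset.mem_filter, Finset.mem_product,
        hP2, hT2] at hq
      obtain ⟨⟨-, hij⟩, ha, hb⟩ := hq
      obtain ⟨hab, hind⟩ := hpar' i j a b ha hb hij.ne
      exact ⟨hind, Set.ncard_pair hab⟩
    · rintro ⟨⟨i, j⟩, a, b⟩ hq ⟨⟨i', j'⟩, a', b'⟩ hq' heq
      simp only [Finset.mem_coe, Finset.mem_sigma, Finset.mem_filter, Finset.mem_product,
        hP2, hT2] at hq hq'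
      obtain ⟨⟨-, hij⟩, ha, hb⟩ := hq
      obtain ⟨⟨-, hij'⟩, ha', hb'⟩ := hq'
      replace heq : ({a, b} : Set α) = {a', b'} := heq
      rcases Set.pair_eq_pair_iff.1 heq with ⟨rfl, rfl⟩ | ⟨rfl, rfl⟩
      · have : i = i' := huniq a i i' ha ha'
        have : j = j' := huniq b j j' hb hb'
        subst_vars; rfl
      · have h1 : i = j' := huniq a i j' ha hb'
        have h2 : j = i' := huniq b j i' hb ha'
        subst_vars
        exact absurd (hij.trans hij') (lt_irrefl _)
  calc T2.card = (T2 : Set ((_ : Fin t × Fin t) × α × α)).ncard :=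
        (Set.ncard_coe_finset _).symm
    _ ≤ _ := hle

lemma fone_le (hsing : ∀ A : Set α, M.Indep A → A.ncard = 1 →
      ∃ a, A = {a} ∧ a ∈ E (idx a)) :
    fNum M 1 ≤ ∑ i, (E i).card := by
  classical
  set T1 := (Finset.univ : Finset (Fin t)).sigma E with hT1
  have hTcard : T1.card = ∑ i, (E i).card := by rw [hT1, Finset.card_sigma]
  rw [← hTcard]
  by_cases hS : {A : Set α | M.Indep A ∧ A.ncard = 1}.Nonempty
  · obtain ⟨A0, hA0⟩ := hS
    obtain ⟨x0, -⟩ := Set.ncard_eq_one.1 hA0.2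
    have hQ : ∀ A : Set α, ∃ a : α, (M.Indep A ∧ A.ncard = 1) →
        (A = {a} ∧ a ∈ E (idx a)) := by
      intro A
      by_cases hA : M.Indep A ∧ A.ncard = 1
      · obtain ⟨a, h1, h2⟩ := hsing A hA.1 hA.2
        exact ⟨a, fun _ => ⟨h1, h2⟩⟩
      · exact ⟨x0, fun hcon => absurd hcon hA⟩
    choose fa hfa using hQ
    have hle : {A : Set α | M.Indep A ∧ A.ncard = 1}.ncard
        ≤ (T1 : Set ((_ : Fin t) × α)).ncard := by
      refine Set.ncard_le_ncard_of_injOn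
        (fun A => (⟨idx (fa A), fa A⟩ : Σ _ : Fin t, α)) ?_ ?_ (Set.toFinite _)
      · intro A hA
        obtain ⟨-, hmem⟩ := hfa A hA
        simp only [Finset.mem_coe, Finset.mem_sigma, hT1]
        exact ⟨Finset.mem_univ _, hmem⟩
      · intro A hA A' hA' hfe
        obtain ⟨h1, -⟩ := hfa A hA
        obtain ⟨h1', -⟩ := hfa A' hA'
        have : fa A = fa A' := congrArg Sigma.snd hfe
        rw [h1, h1', this]
    calc fNum M 1 = {A : Set α | M.Indep A ∧ A.ncard = 1}.ncard := rfl
      _ ≤ (T1 : Set ((_ : Fin t) × α)).ncard := hle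
      _ = T1.card := Set.ncard_coe_finset _
  · have : {A : Set α | M.Indep A ∧ A.ncard = 1} = ∅ :=
      Set.not_nonempty_iff_eq_empty.1 hS
    rw [fNum, this]
    simp

lemma fzero_ge : 1 ≤ fNum M 0 := by
  have hmem : (∅ : Set α) ∈ {A : Set α | M.Indep A ∧ A.ncard = 0} :=
    ⟨M.empty_indep, Set.ncard_empty _⟩
  rw [fNum, ← Set.ncard_singleton (∅ : Set α)]
  exact Set.ncard_le_ncard (by simpa using hmem) (Set.toFinite _)

end Counting

lemma h3_formula {d : ℕ} (hd : 3 ≤ d) (h : ℕ → ℤ) (f : ℕ → ℕ)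
    (hh : ∀ x : ℝ, ∑ j ∈ Finset.range (d + 1), (h j : ℝ) * x ^ j =
      ∑ i ∈ Finset.range (d + 1), (f i : ℝ) * x ^ i * (1 - x) ^ (d - i)) :
    (h 3 : ℝ) = (f 3 : ℝ) - ((d - 2 : ℕ) : ℝ) * f 2 + (((d - 1).choose 2 : ℕ) : ℝ) * f 1
      - ((d.choose 3 : ℕ) : ℝ) * f 0 := by
  set P : ℝ[X] := ∑ j ∈ Finset.range (d + 1), C ((h j : ℝ)) * X ^ j with hP
  set Q : ℝ[X] := ∑ i ∈ Finset.range (d + 1), C ((f i : ℝ)) * X ^ i * (1 - X) ^ (d - i)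
    with hQdef
  have hPQ : P = Q := by
    apply Polynomial.funext
    intro x
    rw [hP, hQdef, Polynomial.eval_finset_sum, Polynomial.eval_finset_sum]
    simpa using hh x
  have hcP : P.coeff 3 = (h 3 : ℝ) := by
    rw [hP, Polynomial.finset_sum_coeff]
    rw [Finset.sum_eq_single 3]
    · simp
    · intro b _ hb
      rw [Polynomial.coeff_C_mul, Polynomial.coeff_X_pow, if_neg (fun hc => hb hc.symm),
        mul_zero]
    · intro hc
      exact absurd (Finset.mem_range.2 (by omega)) hc
  have hcQ : Q.coeff 3 = ∑ i ∈ Finset.range (d + 1), (f i : ℝ) *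
      (if i ≤ 3 then (-1 : ℝ) ^ (3 - i) * ((d - i).choose (3 - i) : ℝ) else 0) := by
    rw [hQdef, Polynomial.finset_sum_coeff]
    refine Finset.sum_congr rfl fun i _ => ?_
    have hcomm : C ((f i : ℝ)) * X ^ i * (1 - X) ^ (d - i)
        = C ((f i : ℝ)) * ((1 - X) ^ (d - i) * X ^ i) := by ring
    rw [hcomm, Polynomial.coeff_C_mul, Polynomial.coeff_mul_X_pow']
    by_cases h3i : i ≤ 3
    · rw [if_pos h3i, if_pos h3i, coeff_one_sub_pow _ _ (by omega)]
    · rw [if_neg h3i, if_neg h3i, mul_zero]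
  have hsum : ∑ i ∈ Finset.range (d + 1), (f i : ℝ) *
      (if i ≤ 3 then (-1 : ℝ) ^ (3 - i) * ((d - i).choose (3 - i) : ℝ) else 0)
      = ∑ i ∈ Finset.range 4, (f i : ℝ) *
      (if i ≤ 3 then (-1 : ℝ) ^ (3 - i) * ((d - i).choose (3 - i) : ℝ) else 0) := by
    symm
    refine Finset.sum_subset (Finset.range_subset_range.2 (by omega)) ?_
    intro i _ hi
    rw [Finset.mem_range, not_lt] at hi
    rw [if_neg (by omega), mul_zero]
  have := hcP ▸ hcQ ▸ (hPQ ▸ rfl : P.coeff 3 = Q.coeff 3)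
  rw [hsum] at this
  rw [this]
  rw [Finset.sum_range_succ, Finset.sum_range_succ, Finset.sum_range_succ,
    Finset.sum_range_succ, Finset.sum_range_zero]
  norm_num
  ring

lemma expand3 {n : ℕ} (hn : 3 ≤ n) (g : Fin n → ℝ) :
    ∑ A ∈ powersetCard 3 (univ : Finset (Fin n)), ∏ i ∈ A, (g i + 1)
      = ∑ A ∈ powersetCard 3 (univ : Finset (Fin n)), ∏ i ∈ A, g i
        + ((n - 2 : ℕ) : ℝ) * ∑ A ∈ powersetCard 2 (univ : Finset (Fin n)), ∏ i ∈ A, g i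
        + (((n - 1).choose 2 : ℕ) : ℝ) * ∑ A ∈ powersetCard 1 (univ : Finset (Fin n)), ∏ i ∈ A, g i
        + ((n.choose 3 : ℕ) : ℝ) := by
  rw [expand_sum]
  have hres : ∑ m ∈ Finset.range (n + 1),
      (if m ≤ 3 then (((n - m).choose (3 - m) : ℕ) : ℝ) else 0) *
        ∑ B ∈ powersetCard m (univ : Finset (Fin n)), ∏ i ∈ B, g i
      = ∑ m ∈ Finset.range 4,
      (if m ≤ 3 then (((n - m).choose (3 - m) : ℕ) : ℝ) else 0) *
        ∑ B ∈ powersetCard m (univ : Finset (Fin n)), ∏ i ∈ B, g i := by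
    symm
    refine Finset.sum_subset (Finset.range_subset_range.2 (by omega)) ?_
    intro i _ hi
    rw [Finset.mem_range, not_lt] at hi
    rw [if_neg (by omega), zero_mul]
  rw [hres, Finset.sum_range_succ, Finset.sum_range_succ, Finset.sum_range_succ,
    Finset.sum_range_succ, Finset.sum_range_zero, pc_zero_sum]
  norm_num
  ring

lemma expand2 {n : ℕ} (hn : 2 ≤ n) (g : Fin n → ℝ) :
    ∑ A ∈ powersetCard 2 (univ : Finset (Fin n)), ∏ i ∈ A, (g i + 1)
      = ∑ A ∈ powersetCard 2 (univ : Finset (Fin n)), ∏ i ∈ A, g i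
        + ((n - 1 : ℕ) : ℝ) * ∑ A ∈ powersetCard 1 (univ : Finset (Fin n)), ∏ i ∈ A, g i
        + ((n.choose 2 : ℕ) : ℝ) := by
  rw [expand_sum]
  have hres : ∑ m ∈ Finset.range (n + 1),
      (if m ≤ 2 then (((n - m).choose (2 - m) : ℕ) : ℝ) else 0) *
        ∑ B ∈ powersetCard m (univ : Finset (Fin n)), ∏ i ∈ B, g i
      = ∑ m ∈ Finset.range 3,
      (if m ≤ 2 then (((n - m).choose (2 - m) : ℕ) : ℝ) else 0) *
        ∑ B ∈ powersetCard m (univ : Finset (Fin n)), ∏ i ∈ B, g i := by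
    symm
    refine Finset.sum_subset (Finset.range_subset_range.2 (by omega)) ?_
    intro i _ hi
    rw [Finset.mem_range, not_lt] at hi
    rw [if_neg (by omega), zero_mul]
  rw [hres, Finset.sum_range_succ, Finset.sum_range_succ,
    Finset.sum_range_succ, Finset.sum_range_zero, pc_zero_sum]
  norm_num
  ring

lemma expand1 {n : ℕ} (hn : 1 ≤ n) (g : Fin n → ℝ) :
    ∑ A ∈ powersetCard 1 (univ : Finset (Fin n)), ∏ i ∈ A, (g i + 1)
      = ∑ A ∈ powersetCard 1 (univ : Finset (Fin n)), ∏ i ∈ A, g i + (n : ℝ) := by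
  rw [expand_sum]
  have hres : ∑ m ∈ Finset.range (n + 1),
      (if m ≤ 1 then (((n - m).choose (1 - m) : ℕ) : ℝ) else 0) *
        ∑ B ∈ powersetCard m (univ : Finset (Fin n)), ∏ i ∈ B, g i
      = ∑ m ∈ Finset.range 2,
      (if m ≤ 1 then (((n - m).choose (1 - m) : ℕ) : ℝ) else 0) *
        ∑ B ∈ powersetCard m (univ : Finset (Fin n)), ∏ i ∈ B, g i := by
    symm
    refine Finset.sum_subset (Finset.range_subset_range.2 (by omega)) ?_
    intro i _ hi
    rw [Finset.mem_range, not_lt] at hi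
    rw [if_neg (by omega), zero_mul]
  rw [hres, Finset.sum_range_succ, Finset.sum_range_succ, Finset.sum_range_zero, pc_zero_sum]
  norm_num
  ring

theorem stmt11 {α : Type*} [Fintype α] {t d : ℕ} (hd : 3 ≤ d) (hdt : d ≤ t)
    (M : Matroid α) (E : Fin t → Finset α) (h : ℕ → ℤ)
    (hloop : ∀ a : α, a ∈ M.E → M.Indep {a})
    (hcover : ∀ a : α, a ∈ M.E ↔ ∃ i, a ∈ E i)
    (hdisj : ∀ i j : Fin t, i ≠ j → Disjoint (E i) (E j))
    (hne : ∀ i, (E i).Nonempty)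
    (hground : ∀ (i : Fin t) (a : α), a ∈ E i → a ∈ M.E)
    (hpar : ∀ (i j : Fin t) (a b : α), a ∈ E i → b ∈ E j → a ≠ b →
      (M.Indep {a, b} ↔ i ≠ j))
    (hrank : ∀ B : Set α, M.IsBase B → B.ncard = d)
    (hh : ∀ x : ℝ, ∑ j ∈ Finset.range (d + 1), (h j : ℝ) * x ^ j =
      ∑ i ∈ Finset.range (d + 1), (fNum M i : ℝ) * x ^ i * (1 - x) ^ (d - i))
    :
    fNum M 3 ≤ ∑ p ∈ Finset.univ.filter (fun p : Fin t × Fin t × Fin t => p.1 < p.2.1 ∧ p.2.1 < p.2.2), (E p.1).card * ((E p.2.1).card * (E p.2.2).card) ∧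
    h 3 ≤ ((∑ p ∈ Finset.univ.filter (fun p : Fin t × Fin t × Fin t => p.1 < p.2.1 ∧ p.2.1 < p.2.2),
        ((E p.1).card - 1) * (((E p.2.1).card - 1) * ((E p.2.2).card - 1))) +
      (t - d) * (∑ p ∈ Finset.univ.filter (fun p : Fin t × Fin t => p.1 < p.2), ((E p.1).card - 1) * ((E p.2).card - 1)) +
      Nat.choose (t - d + 1) 2 * (∑ i, ((E i).card - 1)) + Nat.choose (t - d + 2) 3 : ℕ) := by
  classical
  obtain ⟨e, rfl⟩ : ∃ e, d = e + 3 := ⟨d - 3, by omega⟩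
  obtain ⟨u, rfl⟩ : ∃ u, t = u + (e + 3) := ⟨t - (e + 3), by omega⟩
  have htpos : 0 < u + (e + 3) := by omega
  set idx : α → Fin (u + (e + 3)) := fun a =>
    if hx : ∃ i, a ∈ E i then hx.choose else ⟨0, htpos⟩ with hidxdef
  have huniq : ∀ (a : α) (i j : Fin (u + (e + 3))), a ∈ E i → a ∈ E j → i = j := by
    intro a i j hi hj
    by_contra hne2
    exact (Finset.disjoint_left.1 (hdisj i j hne2) hi) hj
  have hidx_mem : ∀ a ∈ M.E, a ∈ E (idx a) := by
    intro a ha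
    have hx : ∃ i, a ∈ E i := (hcover a).1 ha
    rw [hidxdef]
    simp only [dif_pos hx]
    exact hx.choose_spec
  have hidx_ne : ∀ A : Set α, M.Indep A → ∀ a ∈ A, ∀ b ∈ A, a ≠ b → idx a ≠ idx b := by
    intro A hA a haA b hbA hab
    have hsub : ({a, b} : Set α) ⊆ A := by
      intro x hx
      rcases hx with rfl | rfl
      · exact haA
      · exact hbA
    exact (hpar (idx a) (idx b) a b (hidx_mem a (hA.subset_ground haA))
      (hidx_mem b (hA.subset_ground hbA)) hab).1 (hA.subset hsub)
  have part1 := fthree_le M E idx hidx_mem hidx_ne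
  refine ⟨part1, ?_⟩
  -- remaining f-number bounds
  have hpar' : ∀ (i j : Fin (u + (e + 3))) (a b : α), a ∈ E i → b ∈ E j → i ≠ j →
      a ≠ b ∧ M.Indep {a, b} := by
    intro i j a b ha hb hij
    have hab : a ≠ b := by
      rintro rfl
      exact hij (huniq a i j ha hb)
    exact ⟨hab, (hpar i j a b ha hb hab).2 hij⟩
  have part2 := ftwo_ge M E huniq hpar'
  have hsing : ∀ A : Set α, M.Indep A → A.ncard = 1 → ∃ a, A = {a} ∧ a ∈ E (idx a) := by
    intro A hA h1
    obtain ⟨a, rfl⟩ := Set.ncard_eq_one.1 h1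
    exact ⟨a, rfl, hidx_mem a (hA.subset_ground rfl)⟩
  have part3 := fone_le M E idx hsing
  have part4 := fzero_ge M
  have h3eq := h3_formula (show 3 ≤ e + 3 by omega) h (fNum M) hh
  -- real-valued setup
  set y : Fin (u + (e + 3)) → ℝ := fun i => ((E i).card : ℝ) - 1 with hy
  have hy1 : ∀ i, y i + 1 = ((E i).card : ℝ) := fun i => by rw [hy]; ring
  have hcast1 : ∀ i : Fin (u + (e + 3)), (((E i).card - 1 : ℕ) : ℝ) = y i := by
    intro i
    simp only [hy]
    rw [Nat.cast_sub (Nat.one_le_iff_ne_zero.2 (Finset.card_ne_zero_of_mem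
      (hne i).choose_spec)), Nat.cast_one]
  set X3 := ∑ A ∈ powersetCard 3 (univ : Finset (Fin (u + (e + 3)))), ∏ i ∈ A, y i with hX3
  set X2 := ∑ A ∈ powersetCard 2 (univ : Finset (Fin (u + (e + 3)))), ∏ i ∈ A, y i with hX2
  set X1 := ∑ A ∈ powersetCard 1 (univ : Finset (Fin (u + (e + 3)))), ∏ i ∈ A, y i with hX1
  set S3 := ∑ A ∈ powersetCard 3 (univ : Finset (Fin (u + (e + 3)))), ∏ i ∈ A, (y i + 1) with hS3
  set S2 := ∑ A ∈ powersetCard 2 (univ : Finset (Fin (u + (e + 3)))), ∏ i ∈ A, (y i + 1) with hS2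
  set S1 := ∑ A ∈ powersetCard 1 (univ : Finset (Fin (u + (e + 3)))), ∏ i ∈ A, (y i + 1) with hS1
  -- bounds in ℝ
  have hf3R : (fNum M 3 : ℝ) ≤ S3 := by
    rw [hS3]
    have h0 : (fNum M 3 : ℝ) ≤ ((∑ p ∈ Finset.univ.filter
        (fun p : Fin (u + (e + 3)) × Fin (u + (e + 3)) × Fin (u + (e + 3)) => p.1 < p.2.1 ∧ p.2.1 < p.2.2),
        (E p.1).card * ((E p.2.1).card * (E p.2.2).card) : ℕ) : ℝ) := Nat.cast_le.2 part1
    push_cast at h0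
    refine h0.trans_eq ?_
    rw [tri_sum (fun i => ((E i).card : ℝ))]
    exact Finset.sum_congr rfl fun A _ => Finset.prod_congr rfl fun i _ => (hy1 i).symm
  have hf2R : S2 ≤ (fNum M 2 : ℝ) := by
    rw [hS2]
    calc ∑ A ∈ powersetCard 2 (univ : Finset (Fin (u + (e + 3)))), ∏ i ∈ A, (y i + 1)
        = ∑ p ∈ Finset.univ.filter (fun p : Fin (u + (e + 3)) × Fin (u + (e + 3)) => p.1 < p.2),
            ((E p.1).card : ℝ) * ((E p.2).card : ℝ) := by
          rw [pair_sum (fun i => ((E i).card : ℝ))]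
          exact Finset.sum_congr rfl fun A _ => Finset.prod_congr rfl fun i _ => hy1 i
      _ ≤ (fNum M 2 : ℝ) := by
          have h0 : ((∑ p ∈ Finset.univ.filter (fun p : Fin (u + (e + 3)) × Fin (u + (e + 3)) => p.1 < p.2),
              (E p.1).card * (E p.2).card : ℕ) : ℝ) ≤ (fNum M 2 : ℝ) := Nat.cast_le.2 part2
          push_cast at h0
          exact h0
  have hf1R : (fNum M 1 : ℝ) ≤ S1 := by
    rw [hS1]
    calc (fNum M 1 : ℝ) ≤ ((∑ i, (E i).card : ℕ) : ℝ) := Nat.cast_le.2 part3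
      _ = ∑ A ∈ powersetCard 1 (univ : Finset (Fin (u + (e + 3)))), ∏ i ∈ A, (y i + 1) := by
          rw [pc_one_sum]
          push_cast
          exact Finset.sum_congr rfl fun i _ => (hy1 i).symm
  have hf0R : (1 : ℝ) ≤ (fNum M 0 : ℝ) := by exact_mod_cast part4
  -- expansions
  have hE3 := expand3 (show 3 ≤ (u + (e + 3)) by omega) y
  have hE2 := expand2 (show 2 ≤ (u + (e + 3)) by omega) y
  have hE1 := expand1 (show 1 ≤ (u + (e + 3)) by omega) y
  rw [← hS3, ← hX3, ← hX2, ← hX1] at hE3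
  rw [← hS2, ← hX2, ← hX1] at hE2
  rw [← hS1, ← hX1] at hE1
  -- coefficient casts
  have c2 : ((((u + (e + 3)) - 2 : ℕ)) : ℝ) = (u : ℝ) + e + 1 := by
    rw [show (u + (e + 3)) - 2 = u + e + 1 by omega]; push_cast; ring
  have c1 : ((((u + (e + 3)) - 1).choose 2 : ℕ) : ℝ) = ((u : ℝ) + e + 2) * ((u : ℝ) + e + 1) / 2 := by
    rw [show (u + (e + 3)) - 1 = (u + e + 1) + 1 by omega, cast_choose_two]; push_cast; ring
  have c0 : (((u + (e + 3)).choose 3 : ℕ) : ℝ) = ((u : ℝ) + e + 3) * ((u : ℝ) + e + 2) * ((u : ℝ) + e + 1) / 6 := by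
    rw [show (u + (e + 3)) = (u + e + 1) + 2 by omega, cast_choose_three]; push_cast; ring
  have c1'' : (((u + (e + 3)) - 1 : ℕ) : ℝ) = (u : ℝ) + e + 2 := by
    rw [show (u + (e + 3)) - 1 = u + e + 2 by omega]; push_cast; ring
  have c2' : (((u + (e + 3)).choose 2 : ℕ) : ℝ) = ((u : ℝ) + e + 3) * ((u : ℝ) + e + 2) / 2 := by
    rw [show (u + (e + 3)) = (u + e + 2) + 1 by omega, cast_choose_two]; push_cast; ring
  have cd1 : (((e + 3 - 2 : ℕ)) : ℝ) = (e : ℝ) + 1 := by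
    rw [show e + 3 - 2 = e + 1 by omega]; push_cast; ring
  have cd2 : (((e + 3 - 1).choose 2 : ℕ) : ℝ) = ((e : ℝ) + 2) * ((e : ℝ) + 1) / 2 := by
    rw [show e + 3 - 1 = (e + 1) + 1 by omega, cast_choose_two]; push_cast; ring
  have cd3 : (((e + 3).choose 3 : ℕ) : ℝ) = ((e : ℝ) + 3) * ((e : ℝ) + 2) * ((e : ℝ) + 1) / 6 := by
    rw [show e + 3 = (e + 1) + 2 by omega, cast_choose_three]; push_cast; ring
  have cu2 : (((u + (e + 3) - (e + 3) + 1).choose 2 : ℕ) : ℝ) = ((u : ℝ) + 1) * (u : ℝ) / 2 := by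
    rw [show u + (e + 3) - (e + 3) + 1 = u + 1 by omega, cast_choose_two]
  have cu3 : (((u + (e + 3) - (e + 3) + 2).choose 3 : ℕ) : ℝ)
      = ((u : ℝ) + 2) * ((u : ℝ) + 1) * (u : ℝ) / 6 := by
    rw [show u + (e + 3) - (e + 3) + 2 = u + 2 by omega, cast_choose_three]
  -- the RHS as a real number
  have hNid : ((∑ p ∈ Finset.univ.filter
        (fun p : Fin (u + (e + 3)) × Fin (u + (e + 3)) × Fin (u + (e + 3)) => p.1 < p.2.1 ∧ p.2.1 < p.2.2),
        ((E p.1).card - 1) * (((E p.2.1).card - 1) * ((E p.2.2).card - 1)) +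
      (u + (e + 3) - (e + 3)) * (∑ p ∈ Finset.univ.filter
        (fun p : Fin (u + (e + 3)) × Fin (u + (e + 3)) => p.1 < p.2), ((E p.1).card - 1) * ((E p.2).card - 1)) +
      Nat.choose (u + (e + 3) - (e + 3) + 1) 2 * (∑ i, ((E i).card - 1)) +
      Nat.choose (u + (e + 3) - (e + 3) + 2) 3 : ℕ) : ℝ)
      = X3 + (u : ℝ) * X2 + (((u : ℝ) + 1) * (u : ℝ) / 2) * X1
        + ((u : ℝ) + 2) * ((u : ℝ) + 1) * (u : ℝ) / 6 := by
    push_cast [cu2, cu3]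
    rw [show u + (e + 3) - (e + 3) = u by omega]
    simp only [hcast1]
    rw [tri_sum y, pair_sum y, ← hX3, ← hX2,
      show (∑ i, y i) = X1 from by rw [hX1, pc_one_sum]]
  -- final inequality in ℝ
  have hm2 : (((e + 3 - 2 : ℕ)) : ℝ) * S2 ≤ (((e + 3 - 2 : ℕ)) : ℝ) * (fNum M 2 : ℝ) :=
    mul_le_mul_of_nonneg_left hf2R (Nat.cast_nonneg _)
  have hm1 : (((e + 3 - 1).choose 2 : ℕ) : ℝ) * (fNum M 1 : ℝ)
      ≤ (((e + 3 - 1).choose 2 : ℕ) : ℝ) * S1 :=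
    mul_le_mul_of_nonneg_left hf1R (Nat.cast_nonneg _)
  have hm0 : (((e + 3).choose 3 : ℕ) : ℝ) * 1 ≤ (((e + 3).choose 3 : ℕ) : ℝ) * (fNum M 0 : ℝ) :=
    mul_le_mul_of_nonneg_left hf0R (Nat.cast_nonneg _)
  have hkey : (h 3 : ℝ) ≤ X3 + (u : ℝ) * X2 + (((u : ℝ) + 1) * (u : ℝ) / 2) * X1
      + ((u : ℝ) + 2) * ((u : ℝ) + 1) * (u : ℝ) / 6 := by
    have hiden : S3 - (((e + 3 - 2 : ℕ)) : ℝ) * S2 + (((e + 3 - 1).choose 2 : ℕ) : ℝ) * S1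
        - (((e + 3).choose 3 : ℕ) : ℝ)
        = X3 + (u : ℝ) * X2 + (((u : ℝ) + 1) * (u : ℝ) / 2) * X1
          + ((u : ℝ) + 2) * ((u : ℝ) + 1) * (u : ℝ) / 6 := by
      rw [hE3, hE2, hE1, c2, c1, c0, c1'', c2', cd1, cd2, cd3]
      push_cast
      ring
    rw [h3eq, ← hiden]
    linarith [hf3R, hm2, hm1, hm0]
  have hfinal : (h 3 : ℝ) ≤ _ := hkey.trans_eq hNid.symm
  exact_mod_cast hfinal
end
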